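/- σ-separation in a HEDG is stable under marginalization: for a HEDG G=(V,E,H) and subsets W,X,Y,Z ⊆ V with (X∪Y∪Z) ∩ W = ∅, X ⟂_G^σ Y | Z if and only if X ⟂_{G^{marg∖W}}^σ Y | Z. -/

import Mathlib

namespace HedgPaper

variable {V : Type*}

/-- directed reachability: existence of a directed path (possibly trivial). -/
def Reach (E : V → V → Prop) : V → V → Prop := Relation.ReflTransGen E

/-- `v` and `w` lie in the same strongly connected component. -/
def InSC (E : V → V → Prop) (v w : V) : Prop := Reach E v w ∧ Reach E w v

/-- the set of ancestors of a set `Z`. -/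
def AncSet (E : V → V → Prop) (Z : Set V) : Set V := {v | ∃ z ∈ Z, Reach E v z}

/-- `H` is a simplicial complex over `V`. -/
def IsSimplicial (H : Set (Set V)) : Prop :=
  (∀ v : V, ({v} : Set V) ∈ H) ∧ ∀ F ∈ H, ∀ F' : Set V, F' ⊆ F → F' ∈ H

/-- direction of an edge on a path: forward, backward, or bidirected. -/
inductive EDir : Type
  | fwd | bwd | bi

/-- one step of a walk in a HEDG. -/
structure Step (V : Type*) where
  src : V
  dir : EDir
  dst : V

/-- the step is an actual (directed or bidirected) edge of the HEDG `(V,E,H)`. -/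
def Step.Valid (E : V → V → Prop) (H : Set (Set V)) (s : Step V) : Prop :=
  match s.dir with
  | .fwd => E s.src s.dst
  | .bwd => E s.dst s.src
  | .bi  => s.src ≠ s.dst ∧ ({s.src, s.dst} : Set V) ∈ H

/-- the step has an arrowhead at its destination. -/
def Step.HeadAtDst (s : Step V) : Prop := s.dir = EDir.fwd ∨ s.dir = EDir.bi

/-- the step has an arrowhead at its source. -/
def Step.HeadAtSrc (s : Step V) : Prop := s.dir = EDir.bwd ∨ s.dir = EDir.bi

/-- `l` is a walk (path, possibly with repeated nodes) from `x` to `y` in `(V,E,H)`. -/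
def IsWalk (E : V → V → Prop) (H : Set (Set V)) : List (Step V) → V → V → Prop
  | [], x, y => x = y
  | s :: l, x, y => s.src = x ∧ s.Valid E H ∧ IsWalk E H l s.dst y

/-- all interior nodes of the walk are `Z`-open in the d-separation sense:
colliders are ancestors of `Z`, non-colliders are not in `Z`. -/
def DInteriorOpen (E : V → V → Prop) (Z : Set V) : List (Step V) → Prop
  | [] => True
  | [_] => True
  | s :: t :: l =>
      ((s.HeadAtDst ∧ t.HeadAtSrc) → s.dst ∈ AncSet E Z) ∧
      (¬ (s.HeadAtDst ∧ t.HeadAtSrc) → s.dst ∉ Z) ∧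
      DInteriorOpen E Z (t :: l)

/-- `X` is d-separated from `Y` given `Z` in the HEDG `(V,E,H)`:
every walk from `X` to `Y` is `Z`-blocked. -/
def DSep (E : V → V → Prop) (H : Set (Set V)) (X Y Z : Set V) : Prop :=
  ∀ x ∈ X, ∀ y ∈ Y, ∀ l : List (Step V),
    IsWalk E H l x y → ¬ (x ∉ Z ∧ y ∉ Z ∧ DInteriorOpen E Z l)

/-- all interior nodes of the walk are `Z`-σ-open: colliders are ancestors of `Z`,
and a non-collider in `Z` must not point (via a directed edge of the path) to a
node outside of its strongly connected component. -/
def SigmaInteriorOpen (E : V → V → Prop) (Z : Set V) : List (Step V) → Prop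
  | [] => True
  | [_] => True
  | s :: t :: l =>
      ((s.HeadAtDst ∧ t.HeadAtSrc) → s.dst ∈ AncSet E Z) ∧
      (¬ (s.HeadAtDst ∧ t.HeadAtSrc) →
        ¬ (s.dst ∈ Z ∧ ((¬ s.HeadAtDst ∧ ¬ InSC E s.dst s.src) ∨
                        (¬ t.HeadAtSrc ∧ ¬ InSC E s.dst t.dst)))) ∧
      SigmaInteriorOpen E Z (t :: l)

/-- `X` is σ-separated from `Y` given `Z` in the HEDG `(V,E,H)`. -/
def SigmaSep (E : V → V → Prop) (H : Set (Set V)) (X Y Z : Set V) : Prop :=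
  ∀ x ∈ X, ∀ y ∈ Y, ∀ l : List (Step V),
    IsWalk E H l x y → ¬ (x ∉ Z ∧ y ∉ Z ∧ SigmaInteriorOpen E Z l)

/-- directed edges of the marginalization of `(V,E,H)` w.r.t. (i.e. after removing) `U`:
`a → b` iff there is a directed path `a → u₁ → ⋯ → u_r → b` in `G` with all `uᵢ ∈ U`. -/
def MargE (E : V → V → Prop) (U : Set V) : V → V → Prop :=
  fun a b => a ∉ U ∧ b ∉ U ∧
    ∃ c, Relation.ReflTransGen (fun x y => E x y ∧ y ∈ U) a c ∧ E c b

/-- hyperedges of the marginalization of `(V,E,H)` w.r.t. `U`. -/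
def MargH (E : V → V → Prop) (H : Set (Set V)) (U : Set V) : Set (Set V) :=
  {F' | (∀ v ∈ F', v ∉ U) ∧ ∃ F ∈ H, F ⊆ F' ∪ U ∧
    ∀ v ∈ F', (v ∈ F ∧ v ∉ U) ∨
      ∃ u ∈ F ∩ U, ∃ c, Relation.ReflTransGen (fun x y => E x y ∧ y ∈ U) u c ∧ E c v}

/-- bidirected-edge relation induced by the hyperedges. -/
def BiRel (H : Set (Set V)) : V → V → Prop :=
  fun x y => x ≠ y ∧ ({x, y} : Set V) ∈ H

/-- (generalized) moralization of a HEDG: `v — w` iff there are `a`, `b` with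
`v ∈ {a} ∪ Pa(a)`, `w ∈ {b} ∪ Pa(b)` and a bidirected chain `a ↔ ⋯ ↔ b`. -/
def MoralE (E : V → V → Prop) (H : Set (Set V)) : V → V → Prop :=
  fun v w => v ≠ w ∧ ∃ a b, (v = a ∨ E v a) ∧ (w = b ∨ E w b) ∧
    Relation.ReflTransGen (BiRel H) a b

/-- moralization of a directed graph: undirected versions of the directed edges plus
edges between distinct parents of a common child. -/
def MoralDirE (E : V → V → Prop) : V → V → Prop :=
  fun v w => v ≠ w ∧ (E v w ∨ E w v ∨ ∃ c, E v c ∧ E w c)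

/-- marginalization of an undirected graph `A` w.r.t. `W`: `a — b` iff there is a path
from `a` to `b` with all intermediate nodes in `W`. -/
def MargUnd (A : V → V → Prop) (W : Set V) : V → V → Prop :=
  fun a b => a ∉ W ∧ b ∉ W ∧ a ≠ b ∧
    ∃ c, Relation.ReflTransGen (fun x y => A x y ∧ y ∈ W) a c ∧ A c b

/-- separation in an undirected graph: every path from `X` to `Y` contains a node of
`Z` (including the endnodes). -/
def USep (A : V → V → Prop) (X Y Z : Set V) : Prop :=
  ∀ x ∈ X, ∀ y ∈ Y,
    ¬ (x ∉ Z ∧ Relation.ReflTransGen (fun a b => A a b ∧ b ∉ Z) x y)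

/-- edges of the induced sub-HEDG on `A`. -/
def InducedE (E : V → V → Prop) (A : Set V) : V → V → Prop :=
  fun a b => a ∈ A ∧ b ∈ A ∧ E a b

/-- hyperedges of the induced sub-HEDG on `A`. -/
def InducedH (H : Set (Set V)) (A : Set V) : Set (Set V) := {F | F ∈ H ∧ F ⊆ A}

/-- `F` is an inclusion-maximal hyperedge of `H`. -/
def MaximalHyperedge (H : Set (Set V)) (F : Set V) : Prop :=
  F ∈ H ∧ ∀ F' ∈ H, F ⊆ F' → F' = F

/-- edges of the augmented directed graph of a HEDG: the original directed edges plus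
`e_F → v` for every maximal hyperedge `F` and every `v ∈ F`. -/
def AugE (E : V → V → Prop) (H : Set (Set V)) :
    V ⊕ {F : Set V // MaximalHyperedge H F} →
    V ⊕ {F : Set V // MaximalHyperedge H F} → Prop
  | .inl v, .inl w => E v w
  | .inr F, .inl v => v ∈ F.1
  | _, _ => False

/-- the trivial simplicial complex (only subsingleton hyperedges), making a directed
graph a HEDG without bidirected edges. -/
def TrivialH (W : Type*) : Set (Set W) := {F | Set.Subsingleton F}

/-- directed edges of the acyclification of a HEDG. -/
def AcyE (E : V → V → Prop) : V → V → Prop :=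
  fun v w => ¬ InSC E v w ∧ ∃ w', InSC E w w' ∧ E v w'

/-- hyperedges of the acyclification of a HEDG. -/
def AcyH (E : V → V → Prop) (H : Set (Set V)) : Set (Set V) :=
  {F' | ∃ F ∈ H, ∀ x ∈ F', ∃ v ∈ F, InSC E v x}


/-- edge staying in `W` (target in `W`). -/
abbrev EW (E : V → V → Prop) (W : Set V) : V → V → Prop := fun x y => E x y ∧ y ∈ W

/-- directed path from `u` to `v` whose intermediate nodes are all in `W`. -/
def WPath (E : V → V → Prop) (W : Set V) (u v : V) : Prop :=
  ∃ c, Relation.ReflTransGen (EW E W) u c ∧ E c v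

lemma margE_def {E : V → V → Prop} {W : Set V} {a b : V} :
    MargE E W a b ↔ a ∉ W ∧ b ∉ W ∧ WPath E W a b := Iff.rfl

@[simp] lemma headAtSrc_fwd {a b : V} : (⟨a, .fwd, b⟩ : Step V).HeadAtSrc ↔ False := by
  simp [Step.HeadAtSrc]
@[simp] lemma headAtSrc_bwd {a b : V} : (⟨a, .bwd, b⟩ : Step V).HeadAtSrc := Or.inl rfl
@[simp] lemma headAtSrc_bi {a b : V} : (⟨a, .bi, b⟩ : Step V).HeadAtSrc := Or.inr rfl
@[simp] lemma headAtDst_fwd {a b : V} : (⟨a, .fwd, b⟩ : Step V).HeadAtDst := Or.inl rfl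
@[simp] lemma headAtDst_bwd {a b : V} : (⟨a, .bwd, b⟩ : Step V).HeadAtDst ↔ False := by
  simp [Step.HeadAtDst]
@[simp] lemma headAtDst_bi {a b : V} : (⟨a, .bi, b⟩ : Step V).HeadAtDst := Or.inr rfl

lemma headAtSrc_of_dir_fwd {s : Step V} (h : s.dir = .fwd) : ¬ s.HeadAtSrc := by
  intro hh; rcases hh with h' | h' <;> rw [h] at h' <;> exact EDir.noConfusion h'
lemma headAtDst_of_dir_fwd {s : Step V} (h : s.dir = .fwd) : s.HeadAtDst := Or.inl h
lemma headAtDst_of_dir_bwd {s : Step V} (h : s.dir = .bwd) : ¬ s.HeadAtDst := by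
  intro hh; rcases hh with h' | h' <;> rw [h] at h' <;> exact EDir.noConfusion h'
lemma headAtSrc_of_dir_bwd {s : Step V} (h : s.dir = .bwd) : s.HeadAtSrc := Or.inl h
lemma dir_fwd_of_not_headAtSrc {s : Step V} (h : ¬ s.HeadAtSrc) : s.dir = .fwd := by
  cases hd : s.dir
  · rfl
  · exact absurd (Or.inl hd) h
  · exact absurd (Or.inr hd) h
lemma dir_bwd_of_not_headAtDst {s : Step V} (h : ¬ s.HeadAtDst) : s.dir = .bwd := by
  cases hd : s.dir
  · exact absurd (Or.inl hd) h
  · rfl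
  · exact absurd (Or.inr hd) h

section Walks
variable {E : V → V → Prop} {H : Set (Set V)}

lemma isWalk_append {l₁ l₂ : List (Step V)} {x m y : V}
    (h₁ : IsWalk E H l₁ x m) (h₂ : IsWalk E H l₂ m y) : IsWalk E H (l₁ ++ l₂) x y := by
  induction l₁ generalizing x with
  | nil => cases h₁; exact h₂
  | cons s t ih => exact ⟨h₁.1, h₁.2.1, ih h₁.2.2⟩

lemma isWalk_append_split {l₁ l₂ : List (Step V)} {x y : V}
    (h : IsWalk E H (l₁ ++ l₂) x y) : ∃ m, IsWalk E H l₁ x m ∧ IsWalk E H l₂ m y := by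
  induction l₁ generalizing x with
  | nil => exact ⟨x, rfl, h⟩
  | cons s t ih =>
    obtain ⟨m, h1, h2⟩ := ih h.2.2
    exact ⟨m, ⟨h.1, h.2.1, h1⟩, h2⟩

lemma isWalk_head_src {s : Step V} {l x y} (h : IsWalk E H (s :: l) x y) : s.src = x := h.1

lemma isWalk_last_dst : ∀ {l : List (Step V)} {x y : V}, IsWalk E H l x y →
    ∀ {e}, l.getLast? = some e → e.dst = y := by
  intro l
  induction l with
  | nil => intro x y _ e he; simp at he
  | cons s t ih =>
    intro x y h e he
    cases t with
    | nil =>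
      simp at he; subst he; exact h.2.2.symm ▸ rfl
    | cons u t' =>
      rw [List.getLast?_cons_cons] at he
      exact ih h.2.2 he

/-- the σ-openness condition on a consecutive pair of steps. -/
def Cond (E : V → V → Prop) (Z : Set V) (s t : Step V) : Prop :=
  ((s.HeadAtDst ∧ t.HeadAtSrc) → s.dst ∈ AncSet E Z) ∧
  (¬ (s.HeadAtDst ∧ t.HeadAtSrc) →
    ¬ (s.dst ∈ Z ∧ ((¬ s.HeadAtDst ∧ ¬ InSC E s.dst s.src) ∨
                    (¬ t.HeadAtSrc ∧ ¬ InSC E s.dst t.dst))))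

lemma sigmaOpen_iff_chain' {Z : Set V} :
    ∀ {l : List (Step V)}, SigmaInteriorOpen E Z l ↔ List.Chain' (Cond E Z) l := by
  intro l
  match l with
  | [] => simp [SigmaInteriorOpen, List.Chain']
  | [s] => simp [SigmaInteriorOpen, List.Chain']
  | s :: t :: l =>
    rw [show List.Chain' (Cond E Z) (s :: t :: l) ↔ Cond E Z s t ∧ List.Chain' (Cond E Z) (t :: l) from List.isChain_cons_cons, ← sigmaOpen_iff_chain' (l := t :: l)]
    exact (and_assoc).symm

end Walks

section Transfer
variable {E : V → V → Prop} {W Z : Set V}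

lemma reach_of_wpath {u v : V} (h : WPath E W u v) : Reach E u v := by
  obtain ⟨c, hc, he⟩ := h
  exact Relation.ReflTransGen.tail (Relation.ReflTransGen.lift id (fun a b (hab : EW E W a b) => hab.1) u c hc) he

lemma reach_of_margReach {a b : V} (h : Reach (MargE E W) a b) : Reach E a b := by
  induction h with
  | refl => exact Relation.ReflTransGen.refl
  | tail h' e ih => exact ih.trans (reach_of_wpath e.2.2)

lemma reach_to_marg {a b : V} (ha : a ∉ W) (hb : b ∉ W) (h : Reach E a b) :
    Reach (MargE E W) a b := by
  have key : ∀ a, Reach E a b → ∀ a₀, a₀ ∉ W →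
      Relation.ReflTransGen (EW E W) a₀ a → Reach (MargE E W) a₀ b := by
    intro a h
    induction h using Relation.ReflTransGen.head_induction_on with
    | refl =>
      intro a₀ h₀ hchain
      rcases Relation.ReflTransGen.cases_tail hchain with h' | ⟨c, _, hc⟩
      · exact h' ▸ Relation.ReflTransGen.refl
      · exact absurd hc.2 hb
    | head hac hcb ih =>
      rename_i a c
      intro a₀ h₀ hchain
      by_cases hc : c ∈ W
      · exact ih a₀ h₀ (hchain.tail ⟨hac, hc⟩)
      · exact Relation.ReflTransGen.head ⟨h₀, hc, a, hchain, hac⟩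
          (ih c hc Relation.ReflTransGen.refl)
  exact key a h a ha Relation.ReflTransGen.refl

lemma insc_marg_iff {a b : V} (ha : a ∉ W) (hb : b ∉ W) :
    InSC (MargE E W) a b ↔ InSC E a b :=
  ⟨fun h => ⟨reach_of_margReach h.1, reach_of_margReach h.2⟩,
   fun h => ⟨reach_to_marg ha hb h.1, reach_to_marg hb ha h.2⟩⟩

lemma ancset_marg_sub : AncSet (MargE E W) Z ⊆ AncSet E Z := by
  rintro v ⟨z, hz, hr⟩; exact ⟨z, hz, reach_of_margReach hr⟩

lemma ancset_to_marg (hZW : ∀ z ∈ Z, z ∉ W) {v : V} (hv : v ∉ W)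
    (h : v ∈ AncSet E Z) : v ∈ AncSet (MargE E W) Z := by
  obtain ⟨z, hz, hr⟩ := h
  exact ⟨z, hz, reach_to_marg hv (hZW z hz) hr⟩

lemma first_exit {u a : V} (hu : u ∈ W) (ha : a ∉ W) (h : Reach E u a) :
    ∃ q, q ∉ W ∧ WPath E W u q ∧ Reach E q a := by
  induction h using Relation.ReflTransGen.head_induction_on with
  | refl => exact absurd hu ha
  | head hud hda ih =>
    rename_i u d
    by_cases hd : d ∈ W
    · obtain ⟨q, hq, ⟨c, hc, he⟩, hr⟩ := ih hd
      exact ⟨q, hq, ⟨c, Relation.ReflTransGen.head ⟨hud, hd⟩ hc, he⟩, hr⟩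
    · exact ⟨d, hd, ⟨u, Relation.ReflTransGen.refl, hud⟩, hda⟩

end Transfer

section Builders
variable {E : V → V → Prop} {H : Set (Set V)} {W Z : Set V}

/-- build a forward-directed walk through `W` realizing a `WPath`. -/
lemma fwd_chain (hWZ : ∀ w ∈ W, w ∉ Z) {m : V} :
    ∀ {v c' : V}, Relation.ReflTransGen (EW E W) v c' → E c' m →
    ∃ (ms : List (Step V)) (h e : Step V),
      ms.head? = some h ∧ ms.getLast? = some e ∧ h.src = v ∧ e.dst = m ∧
      IsWalk E H ms v m ∧ (∀ s ∈ ms, s.dir = .fwd) ∧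
      (∀ s ∈ ms, s.dst = m ∨ s.dst ∈ W) ∧
      (∀ s ∈ ms, Reach E s.dst m ∧ Reach E s.src m) ∧
      List.Chain' (Cond E Z) ms := by
  intro v c' hc
  induction hc using Relation.ReflTransGen.head_induction_on with
  | refl =>
    intro he
    refine ⟨[⟨c', .fwd, m⟩], _, _, rfl, rfl, rfl, rfl, ⟨rfl, he, rfl⟩, ?_, ?_, ?_, ?_⟩
    · simp
    · simp
    · intro s hs; simp at hs; subst hs
      exact ⟨Relation.ReflTransGen.refl, Relation.ReflTransGen.single he⟩
    · exact List.isChain_singleton _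
  | head hvd hdc ih =>
    rename_i v d
    intro he
    obtain ⟨ms, h, e, hh, hl, hsrc, hdst, hwalk, hdir, hW, hreach, hchain⟩ := ih he
    have hmsne : ms ≠ [] := by intro hn; rw [hn] at hh; cases hh
    have hdm : Reach E d m := by
      obtain ⟨s0, hs0⟩ : ∃ s0, ms.head? = some s0 := ⟨h, hh⟩
      have := (hreach h (List.mem_of_mem_head? hh)).2
      rwa [hsrc] at this
    refine ⟨⟨v, .fwd, d⟩ :: ms, ⟨v, .fwd, d⟩, e, rfl, ?_, rfl, hdst, ⟨rfl, hvd.1, ?_⟩,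
      ?_, ?_, ?_, ?_⟩
    · cases ms with
      | nil => exact absurd rfl hmsne
      | cons a t => rw [List.getLast?_cons_cons]; exact hl
    · show IsWalk E H ms d m
      cases ms with
      | nil => exact absurd rfl hmsne
      | cons a t =>
        have : a.src = d := by
          have : a = h := by simpa using hh
          rw [this, hsrc]
        exact this ▸ hwalk
    · intro s hs; rcases List.mem_cons.mp hs with rfl | hs
      · rfl
      · exact hdir s hs
    · intro s hs; rcases List.mem_cons.mp hs with rfl | hs
      · right; exact hvd.2
      · exact hW s hs
    · intro s hs; rcases List.mem_cons.mp hs with rfl | hs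
      · exact ⟨hdm, Relation.ReflTransGen.head hvd.1 hdm⟩
      · exact hreach s hs
    · cases ms with
      | nil => exact absurd rfl hmsne
      | cons a t =>
        refine List.isChain_cons_cons.mpr ?_
        refine ⟨⟨?_, ?_⟩, hchain⟩
        · intro ⟨_, hsa⟩
          have : a = h := by simpa using hh
          exact absurd hsa (headAtSrc_of_dir_fwd (this ▸ hdir h (List.mem_of_mem_head? hh)))
        · intro _ ⟨hz, _⟩
          exact absurd hz (hWZ d hvd.2)

/-- build a backward-directed walk through `W` realizing a reversed `WPath`. -/
lemma bwd_chain (hWZ : ∀ w ∈ W, w ∉ Z) {m : V} :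
    ∀ {c' : V}, Relation.ReflTransGen (EW E W) m c' → ∀ {v : V}, E c' v →
    ∃ (ms : List (Step V)) (h e : Step V),
      ms.head? = some h ∧ ms.getLast? = some e ∧ h.src = v ∧ e.dst = m ∧
      IsWalk E H ms v m ∧ (∀ s ∈ ms, s.dir = .bwd) ∧
      (∀ s ∈ ms, s.dst = m ∨ s.dst ∈ W) ∧
      (∀ s ∈ ms, Reach E s.src v) ∧
      List.Chain' (Cond E Z) ms := by
  intro c' hc
  induction hc with
  | refl =>
    intro v he
    refine ⟨[⟨v, .bwd, m⟩], _, _, rfl, rfl, rfl, rfl, ⟨rfl, he, rfl⟩, ?_, ?_, ?_, ?_⟩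
    · simp
    · simp
    · intro s hs; simp at hs; subst hs; exact Relation.ReflTransGen.refl
    · exact List.isChain_singleton _
  | tail hmy hyc ih =>
    rename_i y c'
    intro v he
    obtain ⟨ms, h, e, hh, hl, hsrc, hdst, hwalk, hdir, hW, hreach, hchain⟩ := ih hyc.1
    have hmsne : ms ≠ [] := by intro hn; rw [hn] at hh; cases hh
    refine ⟨⟨v, .bwd, c'⟩ :: ms, ⟨v, .bwd, c'⟩, e, rfl, ?_, rfl, hdst, ⟨rfl, he, ?_⟩,
      ?_, ?_, ?_, ?_⟩
    · cases ms with
      | nil => exact absurd rfl hmsne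
      | cons a t => rw [List.getLast?_cons_cons]; exact hl
    · show IsWalk E H ms c' m
      cases ms with
      | nil => exact absurd rfl hmsne
      | cons a t =>
        have : a = h := by simpa using hh
        have : a.src = c' := by rw [this, hsrc]
        exact this ▸ hwalk
    · intro s hs; rcases List.mem_cons.mp hs with rfl | hs
      · rfl
      · exact hdir s hs
    · intro s hs; rcases List.mem_cons.mp hs with rfl | hs
      · right; exact hyc.2
      · exact hW s hs
    · intro s hs; rcases List.mem_cons.mp hs with rfl | hs
      · exact Relation.ReflTransGen.refl
      · exact (hreach s hs).trans (Relation.ReflTransGen.single he)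
    · cases ms with
      | nil => exact absurd rfl hmsne
      | cons a t =>
        refine List.isChain_cons_cons.mpr ?_
        refine ⟨⟨?_, ?_⟩, hchain⟩
        · intro ⟨hda, _⟩
          exact absurd hda (headAtDst_of_dir_bwd rfl)
        · intro _ ⟨hz, _⟩
          exact absurd hz (hWZ c' hyc.2)

/-- a forward walk with interior in `W` yields a `WPath`. -/
lemma fwd_walk_wpath : ∀ {l : List (Step V)} {v c : V}, IsWalk E H l v c → l ≠ [] →
    (∀ s ∈ l, s.dir = .fwd) → (∀ s ∈ l.dropLast, s.dst ∈ W) → WPath E W v c := by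
  intro l
  induction l with
  | nil => intro v c _ hne; exact absurd rfl hne
  | cons s t ih =>
    intro v c hwalk _ hdir hint
    have hva : E v s.dst := by
      have hv : s.Valid E H := hwalk.2.1
      have hd := hdir s (List.mem_cons_self)
      unfold Step.Valid at hv
      rw [hd] at hv
      rw [← hwalk.1]; exact hv
    cases t with
    | nil =>
      have : s.dst = c := hwalk.2.2
      exact ⟨v, Relation.ReflTransGen.refl, this ▸ hva⟩
    | cons u t' =>
      have hsW : s.dst ∈ W := hint s (by simp)
      obtain ⟨c'', hch, hed⟩ := ih hwalk.2.2 (by simp)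
        (fun x hx => hdir x (List.mem_cons_of_mem _ hx))
        (fun x hx => hint x (by rw [List.dropLast_cons₂]; exact List.mem_cons_of_mem _ hx))
      exact ⟨c'', Relation.ReflTransGen.head ⟨hva, hsW⟩ hch, hed⟩

/-- a backward walk with interior in `W` yields a reversed `WPath`. -/
lemma bwd_walk_wpath : ∀ {l : List (Step V)} {v c : V}, IsWalk E H l v c → l ≠ [] →
    (∀ s ∈ l, s.dir = .bwd) → (∀ s ∈ l.dropLast, s.dst ∈ W) → WPath E W c v := by
  intro l
  induction l with
  | nil => intro v c _ hne; exact absurd rfl hne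
  | cons s t ih =>
    intro v c hwalk _ hdir hint
    have hva : E s.dst v := by
      have hv : s.Valid E H := hwalk.2.1
      have hd := hdir s (List.mem_cons_self)
      unfold Step.Valid at hv
      rw [hd] at hv
      rw [← hwalk.1]; exact hv
    cases t with
    | nil =>
      have : s.dst = c := hwalk.2.2
      exact ⟨c, Relation.ReflTransGen.refl, this ▸ hva⟩
    | cons u t' =>
      have hsW : s.dst ∈ W := hint s (by simp)
      obtain ⟨c'', hch, hed⟩ := ih hwalk.2.2 (by simp)
        (fun x hx => hdir x (List.mem_cons_of_mem _ hx))
        (fun x hx => hint x (by rw [List.dropLast_cons₂]; exact List.mem_cons_of_mem _ hx))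
      exact ⟨s.dst, Relation.ReflTransGen.tail hch ⟨hed, hsW⟩, hva⟩


lemma mem_of_getLast?' {l : List (Step V)} {e : Step V} (h : l.getLast? = some e) : e ∈ l := by
  obtain ⟨h', rfl⟩ := List.mem_getLast?_eq_getLast (x := e) h
  exact List.getLast_mem h'

lemma headOr_append_left {l1 l2 : List (Step V)} {h : Step V} (hh : l1.head? = some h) :
    (l1 ++ l2).head? = some h := by
  rw [List.head?_append, hh]; rfl

lemma lastOr_append_right {l1 l2 : List (Step V)} {e : Step V} (he : l2.getLast? = some e) :
    (l1 ++ l2).getLast? = some e := by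
  rw [List.getLast?_append, he]; rfl

lemma isWalk_valid : ∀ {l : List (Step V)} {x y : V}, IsWalk E H l x y →
    ∀ s ∈ l, s.Valid E H := by
  intro l
  induction l with
  | nil => intro x y _ s hs; simp at hs
  | cons a t ih =>
    intro x y hw s hs
    rcases List.mem_cons.mp hs with rfl | hs
    · exact hw.2.1
    · exact ih hw.2.2 s hs

lemma valid_fwd {s : Step V} (h : s.Valid E H) (hd : s.dir = .fwd) : E s.src s.dst := by
  unfold Step.Valid at h; rwa [hd] at h

lemma valid_bwd {s : Step V} (h : s.Valid E H) (hd : s.dir = .bwd) : E s.dst s.src := by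
  unfold Step.Valid at h; rwa [hd] at h

lemma isWalk_head_dst {a : Step V} {t : List (Step V)} {x y : V}
    (h : IsWalk E H (a :: t) x y) : IsWalk E H t a.dst y := h.2.2

/-- lift a single marginal step to a walk in `G`. -/
lemma liftStep (hH : IsSimplicial H) (hWZ : ∀ w ∈ W, w ∉ Z) {s' : Step V}
    (hval : s'.Valid (MargE E W) (MargH E H W)) :
    ∃ (ms : List (Step V)) (h e : Step V),
      ms.head? = some h ∧ ms.getLast? = some e ∧
      IsWalk E H ms s'.src s'.dst ∧ List.Chain' (Cond E Z) ms ∧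
      (h.HeadAtSrc ↔ s'.HeadAtSrc) ∧
      (¬ h.HeadAtSrc → InSC (MargE E W) s'.src s'.dst → InSC E s'.src h.dst) ∧
      (e.HeadAtDst ↔ s'.HeadAtDst) ∧
      (¬ e.HeadAtDst → InSC (MargE E W) s'.dst s'.src → InSC E s'.dst e.src) := by
  unfold Step.Valid at hval
  set v := s'.src with hveq
  set m := s'.dst with hmeq
  cases hdv : s'.dir with
  | fwd =>
    rw [hdv] at hval
    obtain ⟨hvW, hmW, c', hch, hed⟩ := hval
    obtain ⟨ms, h, e, hh, hl, hsrc, hdst, hwalk, hdir, hW, hreach, hchain⟩ :=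
      fwd_chain (E := E) (H := H) (Z := Z) hWZ hch hed
    refine ⟨ms, h, e, hh, hl, hwalk, hchain, ?_, ?_, ?_, ?_⟩
    · constructor
      · intro hx; exact absurd hx (headAtSrc_of_dir_fwd (hdir h (List.mem_of_mem_head? hh)))
      · intro hx; exact absurd hx (headAtSrc_of_dir_fwd hdv)
    · intro _ hI
      have hvh : E v h.dst := by
        have hhv := isWalk_valid hwalk h (List.mem_of_mem_head? hh)
        have := valid_fwd hhv (hdir h (List.mem_of_mem_head? hh))
        rwa [hsrc] at this
      refine ⟨Relation.ReflTransGen.single hvh, ?_⟩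
      exact (hreach h (List.mem_of_mem_head? hh)).1.trans (reach_of_margReach hI.2)
    · exact iff_of_true (headAtDst_of_dir_fwd (hdir e (mem_of_getLast?' hl)))
        (headAtDst_of_dir_fwd hdv)
    · intro hx; exact absurd (headAtDst_of_dir_fwd (hdir e (mem_of_getLast?' hl))) hx
  | bwd =>
    rw [hdv] at hval
    obtain ⟨hmW, hvW, c', hch, hed⟩ := hval
    obtain ⟨ms, h, e, hh, hl, hsrc, hdst, hwalk, hdir, hW, hreach, hchain⟩ :=
      bwd_chain (E := E) (H := H) (Z := Z) hWZ hch hed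
    refine ⟨ms, h, e, hh, hl, hwalk, hchain, ?_, ?_, ?_, ?_⟩
    · exact iff_of_true (headAtSrc_of_dir_bwd (hdir h (List.mem_of_mem_head? hh)))
        (headAtSrc_of_dir_bwd hdv)
    · intro hx; exact absurd (headAtSrc_of_dir_bwd (hdir h (List.mem_of_mem_head? hh))) hx
    · constructor
      · intro hx; exact absurd hx (headAtDst_of_dir_bwd (hdir e (mem_of_getLast?' hl)))
      · intro hx; exact absurd hx (headAtDst_of_dir_bwd hdv)
    · intro _ hI
      have hme : E m e.src := by
        have hev := isWalk_valid hwalk e (mem_of_getLast?' hl)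
        have := valid_bwd hev (hdir e (mem_of_getLast?' hl))
        rwa [hdst] at this
      refine ⟨Relation.ReflTransGen.single hme, ?_⟩
      exact (hreach e (mem_of_getLast?' hl)).trans (reach_of_margReach hI.2)
  | bi =>
    rw [hdv] at hval
    obtain ⟨hne, hmem⟩ := hval
    obtain ⟨hnotW, F, hF, hFsub, hwit⟩ := hmem
    have hvW : v ∉ W := hnotW v (Set.mem_insert _ _)
    have hmW : m ∉ W := hnotW m (Set.mem_insert_of_mem _ rfl)
    have wv := hwit v (Set.mem_insert _ _)
    have wm := hwit m (Set.mem_insert_of_mem _ rfl)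
    have pair_sub : ∀ x y : V, x ∈ F → y ∈ F → ({x, y} : Set V) ∈ H := by
      intro x y hx hy
      refine hH.2 F hF _ ?_
      intro z hz
      rcases Set.mem_insert_iff.mp hz with rfl | hz
      · exact hx
      · rw [Set.mem_singleton_iff] at hz; subst hz; exact hy
    rcases wv with ⟨hvF, -⟩ | ⟨ua, huaFW, wpv⟩
    · rcases wm with ⟨hmF, -⟩ | ⟨ub, hubFW, wpm⟩
      · -- both direct : single bi step
        refine ⟨[⟨v, .bi, m⟩], _, _, rfl, rfl, ⟨rfl, ⟨hne, pair_sub v m hvF hmF⟩, rfl⟩,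
          List.isChain_singleton _, ?_, ?_, ?_, ?_⟩
        · exact iff_of_true headAtSrc_bi (Or.inr hdv)
        · intro hx; exact absurd headAtSrc_bi hx
        · exact iff_of_true headAtDst_bi (Or.inr hdv)
        · intro hx; exact absurd headAtDst_bi hx
      · -- m via ub
        obtain ⟨c2, hch2, he2⟩ := wpm
        obtain ⟨msf, af, ef, hhf, hlf, hsrcf, hdstf, hwalkf, hdirf, hWf, hreachf, hchainf⟩ :=
          fwd_chain (E := E) (H := H) (Z := Z) hWZ hch2 he2
        have hvub : v ≠ ub := fun hx => hvW (hx ▸ hubFW.2)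
        refine ⟨⟨v, .bi, ub⟩ :: msf, ⟨v, .bi, ub⟩, ef, rfl, ?_, ⟨rfl, ⟨hvub, pair_sub v ub hvF hubFW.1⟩, hwalkf⟩, ?_, ?_, ?_, ?_, ?_⟩
        · cases msf with
          | nil => cases hhf
          | cons a t => rw [List.getLast?_cons_cons]; exact hlf
        · cases msf with
          | nil => cases hhf
          | cons a t =>
            refine List.isChain_cons_cons.mpr ?_
            refine ⟨⟨?_, ?_⟩, hchainf⟩
            · intro ⟨_, hsa⟩
              have ha : a = af := by simpa using hhf
              exact absurd hsa (headAtSrc_of_dir_fwd (ha ▸ hdirf af (List.mem_of_mem_head? hhf)))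
            · intro _ ⟨hz, _⟩
              exact absurd hz (hWZ ub hubFW.2)
        · exact iff_of_true headAtSrc_bi (Or.inr hdv)
        · intro hx; exact absurd headAtSrc_bi hx
        · exact iff_of_true (headAtDst_of_dir_fwd (hdirf ef (mem_of_getLast?' hlf))) (Or.inr hdv)
        · intro hx; exact absurd (headAtDst_of_dir_fwd (hdirf ef (mem_of_getLast?' hlf))) hx
    · obtain ⟨c1, hch1, he1⟩ := wpv
      obtain ⟨msb, hb, eb, hhb, hlb, hsrcb, hdstb, hwalkb, hdirb, hWb, hreachb, hchainb⟩ :=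
        bwd_chain (E := E) (H := H) (Z := Z) hWZ hch1 he1
      rcases wm with ⟨hmF, -⟩ | ⟨ub, hubFW, wpm⟩
      · -- v via ua, m direct
        have huam : ua ≠ m := fun hx => hmW (hx ▸ huaFW.2)
        have walk1 : IsWalk E H [(⟨ua, .bi, m⟩ : Step V)] ua m :=
          ⟨rfl, ⟨huam, pair_sub ua m huaFW.1 hmF⟩, rfl⟩
        refine ⟨msb ++ [⟨ua, .bi, m⟩], hb, ⟨ua, .bi, m⟩,
          headOr_append_left hhb, lastOr_append_right (l2 := [⟨ua, .bi, m⟩]) (by simp),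
          isWalk_append hwalkb walk1, ?_, ?_, ?_, ?_, ?_⟩
        · refine List.isChain_append.mpr ?_
          refine ⟨hchainb, List.isChain_singleton _, ?_⟩
          intro x hx y hy
          rw [hlb] at hx
          have hx' : x = eb := by exact (by simpa using hx : eb = x).symm
          have hy' : y = (⟨ua, .bi, m⟩ : Step V) := by exact (by simpa using hy : _ = y).symm
          rw [hx', hy']
          constructor
          · intro ⟨hda, _⟩
            exact absurd hda (headAtDst_of_dir_bwd (hdirb eb (mem_of_getLast?' hlb)))
          · intro _ ⟨hz, _⟩
            rw [hdstb] at hz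
            exact absurd hz (hWZ ua huaFW.2)
        · exact iff_of_true (headAtSrc_of_dir_bwd (hdirb hb (List.mem_of_mem_head? hhb))) (Or.inr hdv)
        · intro hx; exact absurd (headAtSrc_of_dir_bwd (hdirb hb (List.mem_of_mem_head? hhb))) hx
        · exact iff_of_true headAtDst_bi (Or.inr hdv)
        · intro hx; exact absurd headAtDst_bi hx
      · -- both via ua, ub
        obtain ⟨c2, hch2, he2⟩ := wpm
        obtain ⟨msf, af, ef, hhf, hlf, hsrcf, hdstf, hwalkf, hdirf, hWf, hreachf, hchainf⟩ :=
          fwd_chain (E := E) (H := H) (Z := Z) hWZ hch2 he2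
        by_cases huab : ua = ub
        · subst huab
          refine ⟨msb ++ msf, hb, ef, headOr_append_left hhb, lastOr_append_right hlf,
            isWalk_append hwalkb hwalkf, ?_, ?_, ?_, ?_, ?_⟩
          · refine List.isChain_append.mpr ?_
            refine ⟨hchainb, hchainf, ?_⟩
            intro x hx y hy
            have hx' : x = eb := by rw [hlb] at hx; exact (by simpa using hx : eb = x).symm
            have hy' : y = af := by rw [hhf] at hy; exact (by simpa using hy : af = y).symm
            rw [hx', hy']
            constructor
            · intro ⟨hda, _⟩
              exact absurd hda (headAtDst_of_dir_bwd (hdirb eb (mem_of_getLast?' hlb)))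
            · intro _ ⟨hz, _⟩
              rw [hdstb] at hz
              exact absurd hz (hWZ ua huaFW.2)
          · exact iff_of_true (headAtSrc_of_dir_bwd (hdirb hb (List.mem_of_mem_head? hhb))) (Or.inr hdv)
          · intro hx; exact absurd (headAtSrc_of_dir_bwd (hdirb hb (List.mem_of_mem_head? hhb))) hx
          · exact iff_of_true (headAtDst_of_dir_fwd (hdirf ef (mem_of_getLast?' hlf))) (Or.inr hdv)
          · intro hx; exact absurd (headAtDst_of_dir_fwd (hdirf ef (mem_of_getLast?' hlf))) hx
        · refine ⟨msb ++ ⟨ua, .bi, ub⟩ :: msf, hb, ef, headOr_append_left hhb, ?_,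
            isWalk_append hwalkb ⟨rfl, ⟨huab, pair_sub ua ub huaFW.1 hubFW.1⟩, hwalkf⟩,
            ?_, ?_, ?_, ?_, ?_⟩
          · refine lastOr_append_right ?_
            cases msf with
            | nil => cases hhf
            | cons a t => rw [List.getLast?_cons_cons]; exact hlf
          · refine List.isChain_append.mpr ?_
            refine ⟨hchainb, ?_, ?_⟩
            · cases msf with
              | nil => cases hhf
              | cons a t =>
                refine List.isChain_cons_cons.mpr ?_
                refine ⟨⟨?_, ?_⟩, hchainf⟩
                · intro ⟨_, hsa⟩
                  have ha : a = af := by simpa using hhf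
                  exact absurd hsa (headAtSrc_of_dir_fwd (ha ▸ hdirf af (List.mem_of_mem_head? hhf)))
                · intro _ ⟨hz, _⟩
                  exact absurd hz (hWZ ub hubFW.2)
            · intro x hx y hy
              have hx' : x = eb := by rw [hlb] at hx; exact (by simpa using hx : eb = x).symm
              have hy' : y = (⟨ua, .bi, ub⟩ : Step V) := by exact (by simpa using hy : _ = y).symm
              rw [hx', hy']
              constructor
              · intro ⟨hda, _⟩
                exact absurd hda (headAtDst_of_dir_bwd (hdirb eb (mem_of_getLast?' hlb)))
              · intro _ ⟨hz, _⟩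
                rw [hdstb] at hz
                exact absurd hz (hWZ ua huaFW.2)
          · exact iff_of_true (headAtSrc_of_dir_bwd (hdirb hb (List.mem_of_mem_head? hhb))) (Or.inr hdv)
          · intro hx; exact absurd (headAtSrc_of_dir_bwd (hdirb hb (List.mem_of_mem_head? hhb))) hx
          · exact iff_of_true (headAtDst_of_dir_fwd (hdirf ef (mem_of_getLast?' hlf))) (Or.inr hdv)
          · intro hx; exact absurd (headAtDst_of_dir_fwd (hdirf ef (mem_of_getLast?' hlf))) hx

/-- lift a marginal walk to a σ-open walk in `G`. -/
lemma lift (hH : IsSimplicial H) (hWZ : ∀ w ∈ W, w ∉ Z) :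
    ∀ (l' : List (Step V)) (a b : V), IsWalk (MargE E W) (MargH E H W) l' a b →
    List.Chain' (Cond (MargE E W) Z) l' →
    ∃ l, IsWalk E H l a b ∧ List.Chain' (Cond E Z) l ∧ (l' = [] → l = []) ∧
      (∀ h', l'.head? = some h' → ∃ h, l.head? = some h ∧
        (h.HeadAtSrc ↔ h'.HeadAtSrc) ∧
        (¬ h.HeadAtSrc → InSC (MargE E W) a h'.dst → InSC E a h.dst)) := by
  intro l'
  induction l' with
  | nil =>
    intro a b hwalk _
    exact ⟨[], hwalk, List.isChain_nil, fun _ => rfl, fun h' hh' => (by cases hh')⟩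
  | cons s' rest' ih =>
    intro a b hwalk hchain
    obtain ⟨hsrc, hval, hwrest⟩ := hwalk
    obtain ⟨ms, h, e, hh, hl, hwalkms, hchainms, hiffS, hcontrS, hiffD, hcontrD⟩ :=
      liftStep (E := E) (Z := Z) hH hWZ hval
    have hchrest : List.Chain' (Cond (MargE E W) Z) rest' := hchain.tail
    obtain ⟨L, hwalkL, hchainL, hnilL, hheadL⟩ := ih s'.dst b hwrest hchrest
    have hedst : e.dst = s'.dst := isWalk_last_dst hwalkms hl
    refine ⟨ms ++ L, isWalk_append (hsrc ▸ hwalkms) hwalkL, ?_, fun hx => (by cases hx), ?_⟩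
    · refine List.isChain_append.mpr ?_
      refine ⟨hchainms, hchainL, ?_⟩
      intro x hx y hy
      have hx' : x = e := by rw [hl] at hx; exact (by simpa using hx : e = x).symm
      -- y is the head of L, so rest' is nonempty
      cases hrest : rest' with
      | nil =>
        subst hrest
        rw [hnilL rfl] at hy
        simp at hy
      | cons r rr =>
        subst hrest
        obtain ⟨h2, hh2, hiff2, hcontr2⟩ := hheadL r rfl
        have hy' : y = h2 := by
          rw [hh2] at hy; exact (by simpa using hy : h2 = y).symm
        rw [hx', hy']
        have hmargCond : Cond (MargE E W) Z s' r := (List.isChain_cons_cons.mp hchain).1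
        constructor
        · intro ⟨hed, hhs⟩
          have : s'.HeadAtDst ∧ r.HeadAtSrc := ⟨hiffD.mp hed, hiff2.mp hhs⟩
          have := hmargCond.1 this
          rw [hedst]
          exact ancset_marg_sub this
        · intro hnc ⟨hz, hD⟩
          rw [hedst] at hz
          rcases hD with ⟨hnD, hnI⟩ | ⟨hnS, hnI⟩
          · have hnD' : ¬ s'.HeadAtDst := fun hx => hnD (hiffD.mpr hx)
            have hnAB := fun hAB => hmargCond.2 (fun hx => hnD' hx.1) ⟨hz, hAB⟩
            have hIm : InSC (MargE E W) s'.dst s'.src := by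
              by_contra hni
              exact hnAB (Or.inl ⟨hnD', hni⟩)
            have := hcontrD hnD hIm
            rw [hedst] at hnI
            exact hnI this
          · have hnS' : ¬ r.HeadAtSrc := fun hx => hnS (hiff2.mpr hx)
            have hnAB := fun hAB => hmargCond.2 (fun hx => hnS' hx.2) ⟨hz, hAB⟩
            have hIm : InSC (MargE E W) s'.dst r.dst := by
              by_contra hni
              exact hnAB (Or.inr ⟨hnS', hni⟩)
            have := hcontr2 hnS hIm
            rw [hedst] at hnI
            exact hnI this
    · intro h' hh'
      have hh's : h' = s' := by exact (by simpa using hh' : s' = h').symm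
      subst hh's
      refine ⟨h, headOr_append_left hh, hiffS, ?_⟩
      intro hns hI
      rw [← hsrc] at hI ⊢
      exact hcontrS hns hI

/-! ### reversal of walks -/

def dflip : EDir → EDir
  | .fwd => .bwd
  | .bwd => .fwd
  | .bi => .bi

def sflip (s : Step V) : Step V := ⟨s.dst, dflip s.dir, s.src⟩

lemma sflip_valid {s : Step V} (h : s.Valid E H) : (sflip s).Valid E H := by
  unfold Step.Valid at h ⊢
  unfold sflip dflip
  cases hd : s.dir <;> rw [hd] at h <;> simp only
  · exact h
  · exact h
  · exact ⟨h.1.symm, Set.pair_comm s.src s.dst ▸ h.2⟩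

lemma dir_sflip_fwd {s : Step V} (h : s.dir = .fwd) : (sflip s).dir = .bwd := by
  unfold sflip dflip; rw [h]

lemma isWalk_reverse : ∀ {l : List (Step V)} {x y : V}, IsWalk E H l x y →
    IsWalk E H ((l.map sflip).reverse) y x := by
  intro l
  induction l with
  | nil => intro x y h; exact h.symm
  | cons s t ih =>
    intro x y h
    rw [List.map_cons, List.reverse_cons]
    exact isWalk_append (ih h.2.2) ⟨rfl, sflip_valid h.2.1, h.1⟩

lemma getLast?_map {f : Step V → Step V} : ∀ (l : List (Step V)),
    (l.map f).getLast? = l.getLast?.map f := by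
  intro l
  induction l with
  | nil => rfl
  | cons s t ih =>
    cases t with
    | nil => rfl
    | cons u t' =>
      rw [List.map_cons, List.map_cons, List.getLast?_cons_cons, ← List.map_cons,
        List.getLast?_cons_cons, ih]

/-! ### descending to the first node of `Z` -/

lemma descend {z : V} (hzZ : z ∈ Z) : ∀ {w : V}, Reach E w z → w ∉ Z →
    ∃ (z₀ : V) (ds : List (Step V)) (h e : Step V), z₀ ∈ Z ∧
      ds.head? = some h ∧ ds.getLast? = some e ∧ h.src = w ∧ e.dst = z₀ ∧
      IsWalk E H ds w z₀ ∧ (∀ s ∈ ds, s.dir = .fwd) ∧ (∀ s ∈ ds, s.src ∉ Z) := by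
  intro w hr
  induction hr using Relation.ReflTransGen.head_induction_on with
  | refl => intro hw; exact absurd hzZ hw
  | head hwd hdz ih =>
    rename_i w d
    intro hw
    by_cases hd : d ∈ Z
    · exact ⟨d, [⟨w, .fwd, d⟩], _, _, hd, rfl, rfl, rfl, rfl, ⟨rfl, hwd, rfl⟩,
        by simp, by simp [hw]⟩
    · obtain ⟨z₀, ds, h, e, h1, h2, h3, h4, h5, h6, h7, h8⟩ := ih hd
      have hdsne : ds ≠ [] := by intro hn; rw [hn] at h2; cases h2
      refine ⟨z₀, ⟨w, .fwd, d⟩ :: ds, ⟨w, .fwd, d⟩, e, h1, rfl, ?_, rfl, h5, ⟨rfl, hwd, ?_⟩, ?_, ?_⟩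
      · cases ds with
        | nil => exact absurd rfl hdsne
        | cons a t => rw [List.getLast?_cons_cons]; exact h3
      · show IsWalk E H ds d z₀
        cases ds with
        | nil => exact absurd rfl hdsne
        | cons a t =>
          have : a = h := by simpa using h2
          have : a.src = d := by rw [this, h4]
          exact this ▸ h6
      · intro x hx; rcases List.mem_cons.mp hx with rfl | hx
        · rfl
        · exact h7 x hx
      · intro x hx; rcases List.mem_cons.mp hx with rfl | hx
        · exact hw
        · exact h8 x hx

/-! ### Chain' conditions for directed runs avoiding Z -/

lemma chain_fwd_noZ {Z : Set V} : ∀ {l : List (Step V)} {x y : V}, IsWalk E H l x y →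
    (∀ s ∈ l, s.dir = .fwd) → (∀ s ∈ l, s.src ∉ Z) → List.Chain' (Cond E Z) l := by
  intro l
  induction l with
  | nil => intro x y _ _ _; exact List.isChain_nil
  | cons s t ih =>
    intro x y hw hdir hZ
    cases t with
    | nil => exact List.isChain_singleton _
    | cons u t' =>
      refine List.isChain_cons_cons.mpr ?_
      refine ⟨⟨?_, ?_⟩, ih hw.2.2 (fun a ha => hdir a (List.mem_cons_of_mem _ ha))
        (fun a ha => hZ a (List.mem_cons_of_mem _ ha))⟩
      · intro ⟨_, hsa⟩
        exact absurd hsa (headAtSrc_of_dir_fwd (hdir u (by simp)))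
      · intro _ ⟨hz, _⟩
        have : u.src = s.dst := hw.2.2.1
        rw [← this] at hz
        exact absurd hz (hZ u (by simp))

lemma chain_bwd_noZ {Z : Set V} : ∀ {l : List (Step V)}, (∀ s ∈ l, s.dir = .bwd) →
    (∀ s ∈ l, s.dst ∉ Z) → List.Chain' (Cond E Z) l := by
  intro l
  induction l with
  | nil => intro _ _; exact List.isChain_nil
  | cons s t ih =>
    intro hdir hZ
    cases t with
    | nil => exact List.isChain_singleton _
    | cons u t' =>
      refine List.isChain_cons_cons.mpr ?_
      refine ⟨⟨?_, ?_⟩, ih (fun a ha => hdir a (List.mem_cons_of_mem _ ha))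
        (fun a ha => hZ a (List.mem_cons_of_mem _ ha))⟩
      · intro ⟨hda, _⟩
        exact absurd hda (headAtDst_of_dir_bwd (hdir s (by simp)))
      · intro _ ⟨hz, _⟩
        exact absurd hz (hZ s (by simp))

/-! ### counting colliders in `W` -/

open Classical in
noncomputable def cPair (W : Set V) (s t : Step V) : ℕ :=
  if s.HeadAtDst ∧ t.HeadAtSrc ∧ s.dst ∈ W then 1 else 0

noncomputable def WCC (W : Set V) : List (Step V) → ℕ
  | s :: t :: l => cPair W s t + WCC W (t :: l)
  | _ => 0

noncomputable def bJoin (W : Set V) (l1 l2 : List (Step V)) : ℕ :=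
  match l1.getLast?, l2.head? with
  | some s, some t => cPair W s t
  | _, _ => 0

lemma cPair_eq_zero {W : Set V} {s t : Step V}
    (h : ¬ (s.HeadAtDst ∧ t.HeadAtSrc ∧ s.dst ∈ W)) : cPair W s t = 0 := by
  unfold cPair; rw [if_neg h]

lemma cPair_eq_one {W : Set V} {s t : Step V}
    (h : s.HeadAtDst ∧ t.HeadAtSrc ∧ s.dst ∈ W) : cPair W s t = 1 := by
  unfold cPair; rw [if_pos h]

lemma wcc_nil {W : Set V} : WCC W ([] : List (Step V)) = 0 := rfl
lemma wcc_single {W : Set V} {s : Step V} : WCC W [s] = 0 := rfl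
lemma wcc_cons₂ {W : Set V} {s t : Step V} {l : List (Step V)} :
    WCC W (s :: t :: l) = cPair W s t + WCC W (t :: l) := rfl

lemma wcc_append {W : Set V} : ∀ (l1 l2 : List (Step V)),
    WCC W (l1 ++ l2) = WCC W l1 + bJoin W l1 l2 + WCC W l2 := by
  intro l1
  induction l1 with
  | nil => intro l2; simp [wcc_nil, bJoin]
  | cons s t ih =>
    intro l2
    cases t with
    | nil =>
      cases l2 with
      | nil => simp [wcc_single, bJoin, wcc_nil]
      | cons u l2' =>
        show WCC W (s :: u :: l2') = WCC W [s] + bJoin W [s] (u :: l2') + WCC W (u :: l2')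
        rw [wcc_cons₂, wcc_single]
        show _ = 0 + cPair W s u + _
        omega
    | cons u t' =>
      show WCC W (s :: u :: (t' ++ l2)) = _
      rw [wcc_cons₂]
      have : WCC W ((u :: t') ++ l2) = WCC W (u :: t') + bJoin W (u :: t') l2 + WCC W l2 := ih l2
      rw [show (u :: (t' ++ l2)) = (u :: t') ++ l2 from rfl, this]
      have hbj : bJoin W (s :: u :: t') l2 = bJoin W (u :: t') l2 := by
        unfold bJoin; rw [List.getLast?_cons_cons]
      rw [hbj, wcc_cons₂]
      omega

lemma wcc_zero_of_fwd {W : Set V} : ∀ {l : List (Step V)},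
    (∀ s ∈ l, s.dir = .fwd) → WCC W l = 0 := by
  intro l
  induction l with
  | nil => intro _; rfl
  | cons s t ih =>
    intro hdir
    cases t with
    | nil => rfl
    | cons u t' =>
      rw [wcc_cons₂, ih (fun a ha => hdir a (List.mem_cons_of_mem _ ha))]
      rw [cPair_eq_zero (fun hx => absurd hx.2.1 (headAtSrc_of_dir_fwd (hdir u (by simp))))]

lemma wcc_zero_of_bwd {W : Set V} : ∀ {l : List (Step V)},
    (∀ s ∈ l, s.dir = .bwd) → WCC W l = 0 := by
  intro l
  induction l with
  | nil => intro _; rfl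
  | cons s t ih =>
    intro hdir
    cases t with
    | nil => rfl
    | cons u t' =>
      rw [wcc_cons₂, ih (fun a ha => hdir a (List.mem_cons_of_mem _ ha))]
      rw [cPair_eq_zero (fun hx => absurd hx.1 (headAtDst_of_dir_bwd (hdir s (by simp))))]

lemma wcc_pos {W : Set V} : ∀ {l : List (Step V)}, WCC W l ≠ 0 →
    ∃ (l1 : List (Step V)) (s t : Step V) (l2 : List (Step V)), l = l1 ++ s :: t :: l2 ∧ s.HeadAtDst ∧ t.HeadAtSrc ∧ s.dst ∈ W := by
  intro l
  induction l with
  | nil => intro h; exact absurd rfl h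
  | cons s t ih =>
    intro h
    cases t with
    | nil => exact absurd rfl h
    | cons u t' =>
      rw [wcc_cons₂] at h
      by_cases hc : s.HeadAtDst ∧ u.HeadAtSrc ∧ s.dst ∈ W
      · exact ⟨[], s, u, t', rfl, hc⟩
      · rw [cPair_eq_zero hc] at h
        obtain ⟨l1, s', t'', l2, heq, h1, h2, h3⟩ := ih (by omega)
        exact ⟨s :: l1, s', t'', l2, by rw [heq]; rfl, h1, h2, h3⟩

/-- Phase 1: remove all colliders lying in `W` from a σ-open walk. -/
lemma phase1 {W Z : Set V} (hWZ : ∀ w ∈ W, w ∉ Z) :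
    ∀ (n : ℕ) (l : List (Step V)) (a b : V), WCC W l ≤ n → IsWalk E H l a b →
    List.Chain' (Cond E Z) l →
    ∃ l₂, IsWalk E H l₂ a b ∧ List.Chain' (Cond E Z) l₂ ∧ WCC W l₂ = 0 := by
  intro n
  induction n with
  | zero => intro l a b hn hw hc; exact ⟨l, hw, hc, Nat.le_zero.mp hn⟩
  | succ n ih =>
    intro l a b hn hw hc
    by_cases h0 : WCC W l = 0
    · exact ⟨l, hw, hc, h0⟩
    obtain ⟨l1, s, t, l2, rfl, hsd, hts, hsW⟩ := wcc_pos h0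
    -- the collider condition gives an ancestor path into Z
    obtain ⟨hcl1, hcst, hbound⟩ := List.isChain_append.mp hc
    have hcondst : Cond E Z s t := (List.isChain_cons_cons.mp hcst).1
    obtain ⟨z, hzZ, hreach⟩ := hcondst.1 ⟨hsd, hts⟩
    have hsdZ : s.dst ∉ Z := hWZ s.dst hsW
    obtain ⟨z₀, ds, hd, ed, hz₀Z, hdh, hdl, hdsrc, heddst, hdwalk, hddir, hdsrcZ⟩ :=
      descend (E := E) (H := H) hzZ hreach hsdZ
    set as : List (Step V) := (ds.map sflip).reverse with has
    have hawalk : IsWalk E H as z₀ s.dst := by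
      have := isWalk_reverse (E := E) (H := H) hdwalk
      rwa [← has] at this
    have hadir : ∀ x ∈ as, x.dir = .bwd := by
      intro x hx
      rw [has, List.mem_reverse, List.mem_map] at hx
      obtain ⟨s0, hs0, rfl⟩ := hx
      exact dir_sflip_fwd (hddir s0 hs0)
    have hadstZ : ∀ x ∈ as, x.dst ∉ Z := by
      intro x hx
      rw [has, List.mem_reverse, List.mem_map] at hx
      obtain ⟨s0, hs0, rfl⟩ := hx
      exact hdsrcZ s0 hs0
    have hah : as.head? = some (sflip ed) := by
      rw [has, List.head?_reverse, getLast?_map, hdl]; rfl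
    have hal : as.getLast? = some (sflip hd) := by
      rw [has, List.getLast?_reverse, List.head?_map, hdh]; rfl
    have hdsne : ds ≠ [] := fun hn => by rw [hn] at hdh; cases hdh
    have hasne : as ≠ [] := fun hn => by rw [hn] at hah; cases hah
    -- the new walk
    obtain ⟨m1, hwl1, hwst⟩ := isWalk_append_split hw
    obtain ⟨hssrc, hsval, hwtl2⟩ := hwst
    have hwalknew : IsWalk E H (l1 ++ s :: (ds ++ as ++ t :: l2)) a b := by
      refine isWalk_append hwl1 ⟨hssrc, hsval, ?_⟩
      exact isWalk_append (isWalk_append hdwalk hawalk) hwtl2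
    have hchainnew : List.Chain' (Cond E Z) (l1 ++ s :: (ds ++ as ++ t :: l2)) := by
      refine List.isChain_append.mpr ?_
      refine ⟨hcl1, ?_, ?_⟩
      · refine List.isChain_cons.mpr ?_
        constructor
        · intro y hy
          rw [List.head?_append, List.head?_append, hdh] at hy
          have hy' : y = hd := by exact (by simpa using hy : hd = y).symm
          rw [hy']
          constructor
          · intro ⟨_, hsa⟩
            exact absurd hsa (headAtSrc_of_dir_fwd (hddir hd (List.mem_of_mem_head? hdh)))
          · intro _ ⟨hz', _⟩
            exact absurd hz' hsdZ
        · refine List.isChain_append.mpr ?_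
          refine ⟨?_, (List.isChain_cons_cons.mp hcst).2, ?_⟩
          · refine List.isChain_append.mpr ?_
            refine ⟨chain_fwd_noZ hdwalk hddir hdsrcZ, chain_bwd_noZ hadir hadstZ, ?_⟩
            intro x hx y hy
            have hx' : x = ed := by rw [hdl] at hx; exact (by simpa using hx : ed = x).symm
            have hy' : y = sflip ed := by rw [hah] at hy; exact (by simpa using hy : _ = y).symm
            rw [hx', hy']
            constructor
            · intro _
              exact ⟨z₀, hz₀Z, heddst ▸ Relation.ReflTransGen.refl⟩
            · intro hnc _
              exact hnc ⟨headAtDst_of_dir_fwd (hddir ed (mem_of_getLast?' hdl)),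
                headAtSrc_of_dir_bwd (dir_sflip_fwd (hddir ed (mem_of_getLast?' hdl)))⟩
          · intro x hx y hy
            rw [List.getLast?_append, hal] at hx
            have hx' : x = sflip hd := by exact (by simpa using hx : _ = x).symm
            have hy' : y = t := by exact (by simpa using hy : t = y).symm
            rw [hx', hy']
            constructor
            · intro ⟨hda, _⟩
              exact absurd hda (headAtDst_of_dir_bwd (dir_sflip_fwd (hddir hd (List.mem_of_mem_head? hdh))))
            · intro _ ⟨hz', _⟩
              have : (sflip hd).dst = s.dst := by
                show hd.src = s.dst
                rw [hdsrc]
              rw [this] at hz'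
              exact absurd hz' hsdZ
      · intro x hx y hy
        have hy' : y = s := by exact (by simpa using hy : s = y).symm
        have hby := hbound x hx s (by simp)
        rw [hy']
        exact hby
    -- the count decreases
    have hwccnew : WCC W (l1 ++ s :: (ds ++ as ++ t :: l2)) + 1 = WCC W (l1 ++ s :: t :: l2) := by
      have e1 : WCC W (l1 ++ s :: t :: l2) = WCC W l1 + bJoin W l1 (s :: t :: l2) + (1 + WCC W (t :: l2)) := by
        rw [wcc_append, wcc_cons₂, cPair_eq_one ⟨hsd, hts, hsW⟩]
      have hbj2 : bJoin W l1 (s :: (ds ++ as ++ t :: l2)) = bJoin W l1 (s :: t :: l2) := by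
        unfold bJoin; rfl
      have e2 : WCC W (l1 ++ s :: (ds ++ as ++ t :: l2)) =
          WCC W l1 + bJoin W l1 (s :: t :: l2) + WCC W (s :: (ds ++ as ++ t :: l2)) := by
        rw [wcc_append, hbj2]
      have e3 : WCC W (s :: (ds ++ as ++ t :: l2)) = WCC W (t :: l2) := by
        have h4 : WCC W ([s] ++ (ds ++ as ++ t :: l2)) =
            bJoin W [s] (ds ++ as ++ t :: l2) + WCC W (ds ++ as ++ t :: l2) := by
          rw [wcc_append, wcc_single]; omega
        have hb4 : bJoin W [s] (ds ++ as ++ t :: l2) = 0 := by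
          unfold bJoin
          rw [List.head?_append, List.head?_append, hdh]
          show cPair W s hd = 0
          exact cPair_eq_zero (fun hx => absurd hx.2.1
            (headAtSrc_of_dir_fwd (hddir hd (List.mem_of_mem_head? hdh))))
        have h5 : WCC W (ds ++ as ++ t :: l2) = WCC W (t :: l2) := by
          rw [wcc_append, wcc_append]
          have hwds : WCC W ds = 0 := wcc_zero_of_fwd hddir
          have hwas : WCC W as = 0 := wcc_zero_of_bwd hadir
          have hb5 : bJoin W ds as = 0 := by
            unfold bJoin
            rw [hdl, hah]
            exact cPair_eq_zero (fun hx => absurd (heddst ▸ hx.2.2) (fun hzw => hWZ z₀ hzw hz₀Z))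
          have hb6 : bJoin W (ds ++ as) (t :: l2) = 0 := by
            unfold bJoin
            rw [List.getLast?_append, hal]
            show cPair W (sflip hd) t = 0
            exact cPair_eq_zero (fun hx => absurd hx.1
              (headAtDst_of_dir_bwd (dir_sflip_fwd (hddir hd (List.mem_of_mem_head? hdh)))))
          rw [hwds, hwas, hb5, hb6]
          omega
        show WCC W ([s] ++ (ds ++ as ++ t :: l2)) = _
        rw [h4, hb4, h5]
        omega
      omega
    have hle : WCC W (l1 ++ s :: (ds ++ as ++ t :: l2)) ≤ n := by omega
    exact ih _ a b hle hwalknew hchainnew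

/-! ### segment extraction and shape analysis -/

lemma extract : ∀ (l : List (Step V)) (a b : V), IsWalk E H l a b → b ∉ W → l ≠ [] →
    ∃ (seg rest : List (Step V)) (c : V), l = seg ++ rest ∧ seg ≠ [] ∧ c ∉ W ∧
      IsWalk E H seg a c ∧ IsWalk E H rest c b ∧ (∀ s ∈ seg.dropLast, s.dst ∈ W) := by
  intro l
  induction l with
  | nil => intro a b _ _ hne; exact absurd rfl hne
  | cons s t ih =>
    intro a b hw hbW _
    by_cases hsW : s.dst ∈ W
    · have htne : t ≠ [] := by
        intro hn
        rw [hn] at hw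
        exact hbW (hw.2.2 ▸ hsW)
      obtain ⟨seg', rest, c, heq, hne', hcW, hwseg, hwrest, hint⟩ :=
        ih s.dst b hw.2.2 hbW htne
      refine ⟨s :: seg', rest, c, by rw [heq]; rfl, List.cons_ne_nil _ _, hcW,
        ⟨hw.1, hw.2.1, hwseg⟩, hwrest, ?_⟩
      intro x hx
      rw [List.dropLast_cons_of_ne_nil hne'] at hx
      rcases List.mem_cons.mp hx with rfl | hx
      · exact hsW
      · exact hint x hx
    · exact ⟨[s], t, s.dst, rfl, List.cons_ne_nil _ _, hsW, ⟨hw.1, hw.2.1, rfl⟩, hw.2.2, by simp⟩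

lemma all_fwd_after : ∀ (t : List (Step V)) (s : Step V),
    List.Chain' (fun x y => ¬ (x.HeadAtDst ∧ y.HeadAtSrc ∧ x.dst ∈ W)) (s :: t) →
    s.HeadAtDst → (∀ x ∈ (s :: t).dropLast, x.dst ∈ W) → ∀ u ∈ t, u.dir = .fwd := by
  intro t
  induction t with
  | nil => intro s _ _ _ u hu; simp at hu
  | cons u t' ih =>
    intro s hchain hsd hint u' hu'
    have hsW : s.dst ∈ W := by
      apply hint
      rw [List.dropLast_cons_of_ne_nil (List.cons_ne_nil _ _)]
      simp
    have hnc := (List.isChain_cons_cons.mp hchain).1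
    have hufwd : u.dir = .fwd := by
      apply dir_fwd_of_not_headAtSrc
      intro hus
      exact hnc ⟨hsd, hus, hsW⟩
    rcases List.mem_cons.mp hu' with rfl | hu'
    · exact hufwd
    · refine ih u (List.isChain_cons_cons.mp hchain).2 (headAtDst_of_dir_fwd hufwd) ?_ u' hu'
      intro x hx
      apply hint
      rw [List.dropLast_cons_of_ne_nil (List.cons_ne_nil _ _)]
      exact List.mem_cons_of_mem _ hx

lemma wpath_extend {u d v : V} (hw : WPath E W u d) (hdW : d ∈ W) (hdv : E d v) :
    WPath E W u v := by
  obtain ⟨c', hch, he⟩ := hw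
  exact ⟨d, hch.tail ⟨he, hdW⟩, hdv⟩

lemma shape (hH : IsSimplicial H) : ∀ (seg : List (Step V)) (v c : V), IsWalk E H seg v c →
    seg ≠ [] → c ∉ W → (∀ s ∈ seg.dropLast, s.dst ∈ W) →
    List.Chain' (fun x y => ¬ (x.HeadAtDst ∧ y.HeadAtSrc ∧ x.dst ∈ W)) seg →
    (∀ s ∈ seg, s.dir = .fwd) ∨ (∀ s ∈ seg, s.dir = .bwd) ∨
    ((∀ h, seg.head? = some h → h.HeadAtSrc) ∧ (∀ e, seg.getLast? = some e → e.HeadAtDst) ∧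
      ∃ F ∈ H, F ⊆ ({v, c} : Set V) ∪ W ∧
        (v ∈ F ∨ ∃ u, u ∈ F ∧ u ∈ W ∧ WPath E W u v) ∧
        (c ∈ F ∨ ∃ u, u ∈ F ∧ u ∈ W ∧ WPath E W u c)) := by
  intro seg
  induction seg with
  | nil => intro v c _ hne; exact absurd rfl hne
  | cons s t ih =>
    intro v c hwalk _ hcW hint hchain
    have hsrc : s.src = v := hwalk.1
    cases hd : s.dir with
    | fwd =>
      left
      intro u hu
      rcases List.mem_cons.mp hu with rfl | hu
      · exact hd
      · exact all_fwd_after t s hchain (headAtDst_of_dir_fwd hd) hint u hu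
    | bi =>
      right; right
      have hbiv := hwalk.2.1
      unfold Step.Valid at hbiv
      rw [hd] at hbiv
      cases t with
      | nil =>
        have hdst : s.dst = c := hwalk.2.2
        have hpair : ({v, c} : Set V) ∈ H := by
          rw [← hsrc, ← hdst]; exact hbiv.2
        refine ⟨?_, ?_, {v, c}, hpair, Set.subset_union_left, Or.inl (Set.mem_insert _ _),
          Or.inl (Set.mem_insert_of_mem _ rfl)⟩
        · intro h hh
          have : h = s := by exact (by simpa using hh : s = h).symm
          rw [this]; exact Or.inr hd
        · intro e he
          have : e = s := by exact (by simpa using he : s = e).symm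
          rw [this]; exact Or.inr hd
      | cons u t' =>
        have hsW : s.dst ∈ W := by
          apply hint
          rw [List.dropLast_cons_of_ne_nil (List.cons_ne_nil _ _)]
          simp
        have htfwd : ∀ x ∈ u :: t', x.dir = .fwd :=
          all_fwd_after (u :: t') s hchain (Or.inr hd) hint
        have hint' : ∀ x ∈ (u :: t').dropLast, x.dst ∈ W := by
          intro x hx
          apply hint
          rw [List.dropLast_cons_of_ne_nil (List.cons_ne_nil _ _)]
          exact List.mem_cons_of_mem _ hx
        have hwp : WPath E W s.dst c :=
          fwd_walk_wpath hwalk.2.2 (List.cons_ne_nil _ _) htfwd hint'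
        have hpair : ({v, s.dst} : Set V) ∈ H := by rw [← hsrc]; exact hbiv.2
        refine ⟨?_, ?_, {v, s.dst}, hpair, ?_, Or.inl (Set.mem_insert _ _),
          Or.inr ⟨s.dst, Set.mem_insert_of_mem _ rfl, hsW, hwp⟩⟩
        · intro h hh
          have : h = s := by exact (by simpa using hh : s = h).symm
          rw [this]; exact Or.inr hd
        · intro e he
          rw [List.getLast?_cons_cons] at he
          exact headAtDst_of_dir_fwd (htfwd e (mem_of_getLast?' he))
        · intro x hx
          rcases Set.mem_insert_iff.mp hx with rfl | hx
          · exact Or.inl (Set.mem_insert _ _)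
          · rw [Set.mem_singleton_iff] at hx
            subst hx
            exact Or.inr hsW
    | bwd =>
      have hEdv : E s.dst v := by
        have := hwalk.2.1
        unfold Step.Valid at this
        rw [hd] at this
        rw [← hsrc]; exact this
      cases t with
      | nil =>
        right; left
        intro x hx
        have : x = s := by simpa using hx
        rw [this]; exact hd
      | cons u t' =>
        have hsW : s.dst ∈ W := by
          apply hint
          rw [List.dropLast_cons_of_ne_nil (List.cons_ne_nil _ _)]
          simp
        have hint' : ∀ x ∈ (u :: t').dropLast, x.dst ∈ W := by
          intro x hx
          apply hint
          rw [List.dropLast_cons_of_ne_nil (List.cons_ne_nil _ _)]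
          exact List.mem_cons_of_mem _ hx
        rcases ih s.dst c hwalk.2.2 (List.cons_ne_nil _ _) hcW hint'
            (List.isChain_cons_cons.mp hchain).2 with hfwd | hbwd | ⟨hhS, heD, F, hF, hsub, witd, witc⟩
        · -- fork at s.dst
          right; right
          refine ⟨?_, ?_, {s.dst}, hH.1 s.dst, ?_,
            Or.inr ⟨s.dst, rfl, hsW, ⟨s.dst, Relation.ReflTransGen.refl, hEdv⟩⟩,
            Or.inr ⟨s.dst, rfl, hsW,
              fwd_walk_wpath hwalk.2.2 (List.cons_ne_nil _ _) hfwd hint'⟩⟩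
          · intro h hh
            have : h = s := by exact (by simpa using hh : s = h).symm
            rw [this]; exact Or.inl hd
          · intro e he
            rw [List.getLast?_cons_cons] at he
            exact headAtDst_of_dir_fwd (hfwd e (mem_of_getLast?' he))
          · intro x hx
            rw [Set.mem_singleton_iff] at hx
            subst hx
            exact Or.inr hsW
        · right; left
          intro x hx
          rcases List.mem_cons.mp hx with rfl | hx
          · exact hd
          · exact hbwd x hx
        · right; right
          refine ⟨?_, ?_, F, hF, ?_, ?_, witc⟩
          · intro h hh
            have : h = s := by exact (by simpa using hh : s = h).symm
            rw [this]; exact Or.inl hd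
          · intro e he
            rw [List.getLast?_cons_cons] at he
            exact heD e he
          · intro x hx
            rcases (Set.mem_union _ _ _).mp (hsub hx) with hx' | hx'
            · rcases Set.mem_insert_iff.mp hx' with rfl | hx'
              · exact Or.inr hsW
              · rw [Set.mem_singleton_iff] at hx'
                subst hx'
                exact Or.inl (Set.mem_insert_of_mem _ rfl)
            · exact Or.inr hx'
          · rcases witd with hdF | ⟨u', hu'F, hu'W, wp⟩
            · exact Or.inr ⟨s.dst, hdF, hsW, ⟨s.dst, Relation.ReflTransGen.refl, hEdv⟩⟩
            · exact Or.inr ⟨u', hu'F, hu'W, wpath_extend wp hsW hEdv⟩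

/-- Phase 2: compress a σ-open walk (with no colliders in `W`) to the marginal HEDG. -/
lemma compress (hH : IsSimplicial H) (hWZ : ∀ w ∈ W, w ∉ Z) :
    ∀ (n : ℕ) (l : List (Step V)) (a b : V), l.length ≤ n →
    IsWalk E H l a b → List.Chain' (Cond E Z) l →
    List.Chain' (fun x y => ¬ (x.HeadAtDst ∧ y.HeadAtSrc ∧ x.dst ∈ W)) l →
    a ∉ W → b ∉ W → b ∉ Z →
    (∀ h, l.head? = some h → a ∈ Z → ¬ h.HeadAtSrc → InSC E a h.dst) →
    ∃ l', IsWalk (MargE E W) (MargH E H W) l' a b ∧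
      List.Chain' (Cond (MargE E W) Z) l' ∧ (l = [] → l' = []) ∧
      (∀ h', l'.head? = some h' →
        (h'.HeadAtSrc → (∃ h, l.head? = some h ∧ h.HeadAtSrc) ∨ a ∈ Z) ∧
        (¬ h'.HeadAtSrc → a ∈ Z → InSC (MargE E W) a h'.dst)) := by
  have hZW : ∀ z ∈ Z, z ∉ W := fun z hz hzW => hWZ z hzW hz
  intro n
  induction n with
  | zero =>
    intro l a b hn hw _ _ _ _ _ _
    have : l = [] := List.length_eq_zero_iff.mp (Nat.le_zero.mp hn)
    subst this
    exact ⟨[], hw, List.isChain_nil, fun _ => rfl, fun h' hh' => (by cases hh')⟩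
  | succ n ih =>
    intro l a b hn hw hchain hnc haW hbW hbZ Hin
    cases hlne : l with
    | nil =>
      subst hlne
      exact ⟨[], hw, List.isChain_nil, fun _ => rfl, fun h' hh' => (by cases hh')⟩
    | cons l0 lt =>
      subst hlne
      obtain ⟨seg, rest, c, heq, hsegne, hcW, hwseg, hwrest, hint⟩ :=
        extract (l0 :: lt) a b hw hbW (List.cons_ne_nil _ _)
      obtain ⟨sh, st, rfl⟩ : ∃ sh st, seg = sh :: st := by
        cases seg with
        | nil => exact absurd rfl hsegne
        | cons x y => exact ⟨x, y, rfl⟩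
      rw [heq] at hn hw hchain hnc Hin ⊢
      obtain ⟨hcseg, hcrest, hbound⟩ := List.isChain_append.mp hchain
      obtain ⟨hncseg, hncrest, hncbound⟩ := List.isChain_append.mp hnc
      have hshsrc : sh.src = a := hwseg.1
      have he₀ : (sh :: st).getLast? = some ((sh :: st).getLast (List.cons_ne_nil _ _)) :=
        List.getLast?_eq_getLast _
      set e₀ := (sh :: st).getLast (List.cons_ne_nil _ _) with he₀def
      have hedst : e₀.dst = c := isWalk_last_dst hwseg he₀
      have hreste : rest.length ≤ n := by
        rw [List.length_append, List.length_cons] at hn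
        omega
      have HinRest : ∀ hr, rest.head? = some hr → c ∈ Z → ¬ hr.HeadAtSrc → InSC E c hr.dst := by
        intro hr hhr hcZ hns
        have hcond : Cond E Z e₀ hr :=
          hbound e₀ (Option.mem_def.mpr he₀) hr (Option.mem_def.mpr hhr)
        have h2 := hcond.2 (fun hcol => hns hcol.2)
        rw [hedst] at h2
        by_contra hni
        exact h2 ⟨hcZ, Or.inr ⟨hns, hni⟩⟩
      have HJD1 : ∀ hr, rest.head? = some hr → c ∈ Z → ¬ e₀.HeadAtDst → InSC E c e₀.src := by
        intro hr hhr hcZ hnd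
        have hcond : Cond E Z e₀ hr :=
          hbound e₀ (Option.mem_def.mpr he₀) hr (Option.mem_def.mpr hhr)
        have h2 := hcond.2 (fun hcol => hnd hcol.1)
        rw [hedst] at h2
        by_contra hni
        exact h2 ⟨hcZ, Or.inl ⟨hnd, hni⟩⟩
      obtain ⟨L, hwL, hcL, hLnil, hLhead⟩ :=
        ih rest c b hreste hwrest hcrest hncrest hcW hbW hbZ HinRest
      have hsegres : ∃ ms : List (Step V), IsWalk (MargE E W) (MargH E H W) ms a c ∧
          List.Chain' (Cond (MargE E W) Z) ms ∧
          (∀ e', ms.getLast? = some e' →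
            (e'.HeadAtDst → (∀ e, (sh :: st).getLast? = some e → e.HeadAtDst) ∨ c ∈ Z) ∧
            (¬ e'.HeadAtDst → c ∈ Z → InSC (MargE E W) c e'.src)) ∧
          (∀ h', ms.head? = some h' →
            (h'.HeadAtSrc → (∀ h, (sh :: st).head? = some h → h.HeadAtSrc) ∨ a ∈ Z) ∧
            (¬ h'.HeadAtSrc → a ∈ Z → InSC (MargE E W) a h'.dst)) ∧
          (ms = [] → a = c ∧ (∀ h, (sh :: st).head? = some h → h.HeadAtSrc)) := by
        rcases shape hH (sh :: st) a c hwseg (List.cons_ne_nil _ _) hcW hint hncseg with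
          hfwd | hbwd | ⟨hhS, heD, F, hF, hsub, wita, witc⟩
        · -- all forward
          have hwp : WPath E W a c := fwd_walk_wpath hwseg (List.cons_ne_nil _ _) hfwd hint
          have hrac : Reach E a c := reach_of_wpath hwp
          have hmarg : MargE E W a c := ⟨haW, hcW, hwp⟩
          by_cases hfix : a ∈ Z ∧ ¬ Reach E c a
          · obtain ⟨haZ, hnr⟩ := hfix
            have hshd : sh.dir = .fwd := hfwd sh (by simp)
            have hIaw : InSC E a sh.dst := Hin sh rfl haZ (headAtSrc_of_dir_fwd hshd)
            obtain ⟨u1, t1, rfl⟩ : ∃ u1 t1, st = u1 :: t1 := by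
              cases st with
              | nil =>
                have hshc : sh.dst = c := hwseg.2.2
                exact absurd (hshc ▸ hIaw.2) hnr
              | cons u1 t1 => exact ⟨u1, t1, rfl⟩
            have hw1W : sh.dst ∈ W := by
              apply hint
              rw [List.dropLast_cons_of_ne_nil (List.cons_ne_nil _ _)]
              simp
            obtain ⟨q, hqW, hwpq, hqa⟩ := first_exit hw1W haW hIaw.2
            have hEaw1 : E a sh.dst := by
              have := valid_fwd hwseg.2.1 hshd
              rwa [hshsrc] at this
            have hmargaq : MargE E W a q := by
              obtain ⟨c', hch, hed⟩ := hwpq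
              exact ⟨haW, hqW, c', Relation.ReflTransGen.head ⟨hEaw1, hw1W⟩ hch, hed⟩
            have hwp1c : WPath E W sh.dst c :=
              fwd_walk_wpath hwseg.2.2 (List.cons_ne_nil _ _)
                (fun x hx => hfwd x (List.mem_cons_of_mem _ hx))
                (fun x hx => hint x (by
                  rw [List.dropLast_cons_of_ne_nil (List.cons_ne_nil _ _)]
                  exact List.mem_cons_of_mem _ hx))
            have hqc : q ≠ c := fun hqceq => hnr (hqceq ▸ hqa)
            have hmargH : ({q, c} : Set V) ∈ MargH E H W := by
              refine ⟨?_, {sh.dst}, hH.1 _, ?_, ?_⟩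
              · intro x hx
                rcases Set.mem_insert_iff.mp hx with rfl | hx
                · exact hqW
                · rw [Set.mem_singleton_iff] at hx; subst hx; exact hcW
              · intro x hx
                rw [Set.mem_singleton_iff] at hx; subst hx
                exact Or.inr hw1W
              · intro x hx
                rcases Set.mem_insert_iff.mp hx with rfl | hx
                · exact Or.inr ⟨sh.dst, ⟨rfl, hw1W⟩, hwpq⟩
                · rw [Set.mem_singleton_iff] at hx; subst hx
                  exact Or.inr ⟨sh.dst, ⟨rfl, hw1W⟩, hwp1c⟩
            refine ⟨[⟨a, .fwd, q⟩, ⟨q, .bi, c⟩],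
              ⟨rfl, hmargaq, rfl, ⟨hqc, hmargH⟩, rfl⟩, ?_, ?_, ?_, fun hx => (by cases hx)⟩
            · refine List.isChain_cons_cons.mpr ?_
              refine ⟨⟨?_, ?_⟩, List.isChain_singleton _⟩
              · intro _
                exact ⟨a, haZ, reach_to_marg hqW haW hqa⟩
              · intro hnc' _
                exact hnc' ⟨headAtDst_fwd, headAtSrc_bi⟩
            · intro e' he'
              rw [List.getLast?_cons_cons] at he'
              have he'' : e' = (⟨q, .bi, c⟩ : Step V) := by
                exact (by simpa using he' : _ = e').symm
              subst he''
              exact ⟨fun _ => Or.inl (fun e he => headAtDst_of_dir_fwd (hfwd e (mem_of_getLast?' he))),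
                fun hnd => absurd headAtDst_bi hnd⟩
            · intro h' hh'
              have hh'' : h' = (⟨a, .fwd, q⟩ : Step V) := by
                exact (by simpa using hh' : _ = h').symm
              subst hh''
              refine ⟨fun hhs => absurd hhs (by simp), ?_⟩
              intro _ _
              exact ⟨Relation.ReflTransGen.single hmargaq, reach_to_marg hqW haW hqa⟩
          · refine ⟨[⟨a, .fwd, c⟩], ⟨rfl, hmarg, rfl⟩, List.isChain_singleton _, ?_, ?_,
              fun hx => (by cases hx)⟩
            · intro e' he'
              have he'' : e' = (⟨a, .fwd, c⟩ : Step V) := by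
                exact (by simpa using he' : _ = e').symm
              subst he''
              exact ⟨fun _ => Or.inl (fun e he => headAtDst_of_dir_fwd (hfwd e (mem_of_getLast?' he))),
                fun hnd => absurd headAtDst_fwd hnd⟩
            · intro h' hh'
              have hh'' : h' = (⟨a, .fwd, c⟩ : Step V) := by
                exact (by simpa using hh' : _ = h').symm
              subst hh''
              refine ⟨fun hhs => absurd hhs (by simp), ?_⟩
              intro _ haZ
              have hrca : Reach E c a := by
                by_contra hr
                exact hfix ⟨haZ, hr⟩
              exact ⟨reach_to_marg haW hcW hrac, reach_to_marg hcW haW hrca⟩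
        · -- all backward
          have hwp : WPath E W c a := bwd_walk_wpath hwseg (List.cons_ne_nil _ _) hbwd hint
          have hrca : Reach E c a := reach_of_wpath hwp
          have hmarg : MargE E W c a := ⟨hcW, haW, hwp⟩
          by_cases hfix : c ∈ Z ∧ ¬ Reach E a c
          · obtain ⟨hcZ, hnr⟩ := hfix
            have hrestne : rest ≠ [] := by
              intro hn'
              rw [hn'] at hwrest
              exact hbZ (hwrest ▸ hcZ)
            obtain ⟨hr, hhr⟩ : ∃ hr, rest.head? = some hr := ⟨rest.head hrestne, List.head?_eq_head _⟩
            have he₀d : e₀.dir = .bwd := hbwd e₀ (mem_of_getLast?' he₀)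
            have hIce : InSC E c e₀.src := HJD1 hr hhr hcZ (headAtDst_of_dir_bwd he₀d)
            obtain ⟨u1, t1, rfl⟩ : ∃ u1 t1, st = u1 :: t1 := by
              cases st with
              | nil =>
                have he₀sh : e₀ = sh := rfl
                rw [he₀sh, hshsrc] at hIce
                exact absurd hIce.2 hnr
              | cons u1 t1 => exact ⟨u1, t1, rfl⟩
            have hdecomp : (sh :: u1 :: t1).dropLast ++ [e₀] = sh :: u1 :: t1 :=
              List.dropLast_append_getLast _
            have hinitne : (sh :: u1 :: t1).dropLast ≠ [] := by
              rw [List.dropLast_cons_of_ne_nil (List.cons_ne_nil _ _)]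
              exact List.cons_ne_nil _ _
            have hwseg' := hwseg
            rw [← hdecomp] at hwseg'
            obtain ⟨m, hwinit, hwlast⟩ := isWalk_append_split hwseg'
            have he₀src : e₀.src = m := hwlast.1
            have hmW : m ∈ W := by
              obtain ⟨ei, hei⟩ : ∃ ei, (sh :: u1 :: t1).dropLast.getLast? = some ei :=
                ⟨_, List.getLast?_eq_getLast hinitne⟩
              have hei' : ei.dst = m := isWalk_last_dst hwinit hei
              rw [← hei']
              exact hint ei (mem_of_getLast?' hei)
            have hEcm : E c e₀.src := by
              have := valid_bwd hwlast.2.1 he₀d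
              rwa [hedst] at this
            have he₀W : e₀.src ∈ W := by rw [he₀src]; exact hmW
            obtain ⟨q, hqW, hwpq, hqc⟩ := first_exit he₀W hcW hIce.2
            have hmargcq : MargE E W c q := by
              obtain ⟨c', hch, hed⟩ := hwpq
              exact ⟨hcW, hqW, c', Relation.ReflTransGen.head ⟨hEcm, he₀W⟩ hch, hed⟩
            have hwpua : WPath E W e₀.src a := by
              rw [he₀src]
              refine bwd_walk_wpath hwinit hinitne ?_ ?_
              · intro x hx
                refine hbwd x ?_
                rw [← hdecomp]
                exact List.mem_append_left _ hx
              · intro x hx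
                exact hint x (List.dropLast_subset _ hx)
            have haq : a ≠ q := fun hh' => hnr (hh' ▸ hqc)
            have hmargH : ({a, q} : Set V) ∈ MargH E H W := by
              refine ⟨?_, {e₀.src}, hH.1 _, ?_, ?_⟩
              · intro x hx
                rcases Set.mem_insert_iff.mp hx with rfl | hx
                · exact haW
                · rw [Set.mem_singleton_iff] at hx; subst hx; exact hqW
              · intro x hx
                rw [Set.mem_singleton_iff] at hx; subst hx
                exact Or.inr he₀W
              · intro x hx
                rcases Set.mem_insert_iff.mp hx with rfl | hx
                · exact Or.inr ⟨e₀.src, ⟨rfl, he₀W⟩, hwpua⟩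
                · rw [Set.mem_singleton_iff] at hx; subst hx
                  exact Or.inr ⟨e₀.src, ⟨rfl, he₀W⟩, hwpq⟩
            refine ⟨[⟨a, .bi, q⟩, ⟨q, .bwd, c⟩],
              ⟨rfl, ⟨haq, hmargH⟩, rfl, hmargcq, rfl⟩, ?_, ?_, ?_, fun hx => (by cases hx)⟩
            · refine List.isChain_cons_cons.mpr ?_
              refine ⟨⟨?_, ?_⟩, List.isChain_singleton _⟩
              · intro _
                exact ⟨c, hcZ, reach_to_marg hqW hcW hqc⟩
              · intro hnc' _
                exact hnc' ⟨headAtDst_bi, headAtSrc_bwd⟩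
            · intro e' he'
              rw [List.getLast?_cons_cons] at he'
              have he'' : e' = (⟨q, .bwd, c⟩ : Step V) := by
                exact (by simpa using he' : _ = e').symm
              subst he''
              refine ⟨fun hd => absurd hd (by simp), ?_⟩
              intro _ _
              exact ⟨Relation.ReflTransGen.single hmargcq, reach_to_marg hqW hcW hqc⟩
            · intro h' hh'
              have hh'' : h' = (⟨a, .bi, q⟩ : Step V) := by
                exact (by simpa using hh' : _ = h').symm
              subst hh''
              exact ⟨fun _ => Or.inl (fun h hh => by
                  have : h = sh := by exact (by simpa using hh : sh = h).symm
                  rw [this]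
                  exact headAtSrc_of_dir_bwd (hbwd sh (by simp))),
                fun hns => absurd headAtSrc_bi hns⟩
          · refine ⟨[⟨a, .bwd, c⟩], ⟨rfl, hmarg, rfl⟩, List.isChain_singleton _, ?_, ?_,
              fun hx => (by cases hx)⟩
            · intro e' he'
              have he'' : e' = (⟨a, .bwd, c⟩ : Step V) := by
                exact (by simpa using he' : _ = e').symm
              subst he''
              refine ⟨fun hd => absurd hd (by simp), ?_⟩
              intro _ hcZ
              have hrac : Reach E a c := by
                by_contra hr
                exact hfix ⟨hcZ, hr⟩
              exact ⟨reach_to_marg hcW haW hrca, reach_to_marg haW hcW hrac⟩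
            · intro h' hh'
              have hh'' : h' = (⟨a, .bwd, c⟩ : Step V) := by
                exact (by simpa using hh' : _ = h').symm
              subst hh''
              exact ⟨fun _ => Or.inl (fun h hh => by
                  have : h = sh := by exact (by simpa using hh : sh = h).symm
                  rw [this]
                  exact headAtSrc_of_dir_bwd (hbwd sh (by simp))),
                fun hns => absurd headAtSrc_bwd hns⟩
        · -- bidirected-like segment
          by_cases hac : a = c
          · subst hac
            exact ⟨[], rfl, List.isChain_nil, fun e' he' => (by cases he'),
              fun h' hh' => (by cases hh'), fun _ => ⟨rfl, hhS⟩⟩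
          · have hmargH : ({a, c} : Set V) ∈ MargH E H W := by
              refine ⟨?_, F, hF, hsub, ?_⟩
              · intro x hx
                rcases Set.mem_insert_iff.mp hx with rfl | hx
                · exact haW
                · rw [Set.mem_singleton_iff] at hx; subst hx; exact hcW
              · intro x hx
                rcases Set.mem_insert_iff.mp hx with rfl | hx
                · rcases wita with hxF | ⟨u, huF, huW, wp⟩
                  · exact Or.inl ⟨hxF, haW⟩
                  · exact Or.inr ⟨u, ⟨huF, huW⟩, wp⟩
                · rw [Set.mem_singleton_iff] at hx; subst hx
                  rcases witc with hxF | ⟨u, huF, huW, wp⟩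
                  · exact Or.inl ⟨hxF, hcW⟩
                  · exact Or.inr ⟨u, ⟨huF, huW⟩, wp⟩
            refine ⟨[⟨a, .bi, c⟩], ⟨rfl, ⟨hac, hmargH⟩, rfl⟩, List.isChain_singleton _, ?_, ?_,
              fun hx => (by cases hx)⟩
            · intro e' he'
              have he'' : e' = (⟨a, .bi, c⟩ : Step V) := by
                exact (by simpa using he' : _ = e').symm
              subst he''
              exact ⟨fun _ => Or.inl heD, fun hnd => absurd headAtDst_bi hnd⟩
            · intro h' hh'
              have hh'' : h' = (⟨a, .bi, c⟩ : Step V) := by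
                exact (by simpa using hh' : _ = h').symm
              subst hh''
              exact ⟨fun _ => Or.inl hhS, fun hns => absurd headAtSrc_bi hns⟩
      obtain ⟨ms, hwms, hcms, hmslast, hmshead, hmsnil⟩ := hsegres
      refine ⟨ms ++ L, isWalk_append hwms hwL, ?_, fun hx => absurd hx (by simp), ?_⟩
      · refine List.isChain_append.mpr ?_
        refine ⟨hcms, hcL, ?_⟩
        intro x hx y hy
        have hx' : ms.getLast? = some x := Option.mem_def.mp hx
        have hy' : L.head? = some y := Option.mem_def.mp hy
        have hrestne : rest ≠ [] := by
          intro hn'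
          rw [hLnil hn'] at hy'
          cases hy'
        obtain ⟨hr, hhr⟩ : ∃ hr, rest.head? = some hr := ⟨rest.head hrestne, List.head?_eq_head _⟩
        have hxdst : x.dst = c := isWalk_last_dst hwms hx'
        obtain ⟨hL1, hL2⟩ := hLhead y hy'
        obtain ⟨hm1, hm2⟩ := hmslast x hx'
        constructor
        · intro ⟨hxd, hys⟩
          rw [hxdst]
          by_cases hcZ : c ∈ Z
          · exact ⟨c, hcZ, Relation.ReflTransGen.refl⟩
          · rcases hm1 hxd with hsegD | hcZ'
            swap
            · exact absurd hcZ' hcZ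
            rcases hL1 hys with ⟨h₁, hh₁, hS₁⟩ | hcZ'
            swap
            · exact absurd hcZ' hcZ
            have hhr' := hhr
            rw [hh₁] at hhr'
            have hr₁ : h₁ = hr := by injection hhr'
            have hcond : Cond E Z e₀ hr :=
              hbound e₀ (Option.mem_def.mpr he₀) hr (Option.mem_def.mpr hhr)
            have hanc := hcond.1 ⟨hsegD e₀ he₀, hr₁ ▸ hS₁⟩
            rw [hedst] at hanc
            exact ancset_to_marg hZW hcW hanc
        · intro hnc' ⟨hzx, hD⟩
          rw [hxdst] at hzx
          rcases hD with ⟨hnd, hni⟩ | ⟨hns, hni⟩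
          · rw [hxdst] at hni
            exact hni (hm2 hnd hzx)
          · rw [hxdst] at hni
            exact hni (hL2 hns hzx)
      · intro h' hh'
        cases hmscase : ms with
        | nil =>
          rw [hmscase] at hh'
          simp only [List.nil_append] at hh'
          obtain ⟨haec, hheads⟩ := hmsnil hmscase
          obtain ⟨hL1, hL2⟩ := hLhead h' hh'
          subst haec
          exact ⟨fun _ => Or.inl ⟨sh, rfl, hheads sh rfl⟩, hL2⟩
        | cons m0 ms' =>
          have hh'm : ms.head? = some h' := by
            rw [hmscase] at hh' ⊢
            simpa using hh'
          obtain ⟨hm1, hm2⟩ := hmshead h' hh'm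
          refine ⟨?_, hm2⟩
          intro hS
          rcases hm1 hS with hall | haZ
          · exact Or.inl ⟨sh, rfl, hall sh rfl⟩
          · exact Or.inr haZ


lemma noWC_of_wcc_zero {W : Set V} : ∀ {l : List (Step V)}, WCC W l = 0 →
    List.Chain' (fun x y => ¬ (x.HeadAtDst ∧ y.HeadAtSrc ∧ x.dst ∈ W)) l := by
  intro l
  induction l with
  | nil => intro _; exact List.isChain_nil
  | cons s t ih =>
    intro h
    cases t with
    | nil => exact List.isChain_singleton _
    | cons u t' =>
      rw [wcc_cons₂] at h
      refine List.isChain_cons_cons.mpr ?_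
      refine ⟨?_, ih (by omega)⟩
      intro hcol
      have := cPair_eq_one (W := W) hcol
      omega

end Builders


/-- σ-separation in a HEDG is stable under marginalization: for
`(X ∪ Y ∪ Z) ∩ W = ∅`, `X ⟂_G^σ Y | Z` iff `X ⟂_{G^{marg∖W}}^σ Y | Z`. -/
theorem sigmaSep_marginalization {V : Type*} [Fintype V]
    (E : V → V → Prop) (H : Set (Set V)) (hH : IsSimplicial H)
    (W X Y Z : Set V) (hW : (X ∪ Y ∪ Z) ∩ W = ∅) :
    SigmaSep E H X Y Z ↔ SigmaSep (MargE E W) (MargH E H W) X Y Z := by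
  have hdisj : ∀ v, v ∈ X ∪ Y ∪ Z → v ∉ W := by
    intro v hv hvW
    have hmem : v ∈ (X ∪ Y ∪ Z) ∩ W := ⟨hv, hvW⟩
    rw [hW] at hmem
    exact hmem
  have hWZ : ∀ w ∈ W, w ∉ Z := fun w hw hz => hdisj w (Or.inr hz) hw
  constructor
  · intro hsep x hx y hy l' hwalk'
    intro ⟨hxZ, hyZ, hopen'⟩
    obtain ⟨l, hwalk, hchain, -, -⟩ :=
      lift hH hWZ l' x y hwalk' (sigmaOpen_iff_chain'.mp hopen')
    exact hsep x hx y hy l hwalk ⟨hxZ, hyZ, sigmaOpen_iff_chain'.mpr hchain⟩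
  · intro hsep x hx y hy l hwalk
    intro ⟨hxZ, hyZ, hopen⟩
    have hxW : x ∉ W := hdisj x (Or.inl (Or.inl hx))
    have hyW : y ∉ W := hdisj y (Or.inl (Or.inr hy))
    obtain ⟨l₂, hw₂, hc₂, hwcc⟩ :=
      phase1 hWZ (WCC W l) l x y le_rfl hwalk (sigmaOpen_iff_chain'.mp hopen)
    obtain ⟨l', hw', hc', -, -⟩ :=
      compress hH hWZ l₂.length l₂ x y le_rfl hw₂ hc₂ (noWC_of_wcc_zero hwcc) hxW hyW hyZ
        (fun h hh hxZ' _ => absurd hxZ' hxZ)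
    exact hsep x hx y hy l' hw' ⟨hxZ, hyZ, sigmaOpen_iff_chain'.mpr hc'⟩


end HedgPaper
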